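/- arXiv:2505.09120 — 6 statements merged into one kernel-verified Lean document; each statement's English description precedes it below -/
import Mathlib

section
/- Let S be a triangulated category with a good metric {M_i}. If a map of Cauchy sequences f'_* : a'_* → b'_* has a subsequence f_* : a_* → b_* which is a type-n morphism, then f'_* itself is a type-n morphism. -/
/-!
Statement 0 (Neeman, "Excellent metrics", Lemma 3.337):
Let `S` be a triangulated category with a good metric `{M_i}`.  If a map of Cauchy
sequences `f' : a' ⟶ b'` has a subsequence which is a type-`n` morphism, then `f'`
itself is a type-`n` morphism.
-/

open CategoryTheory CategoryTheory.Limits CategoryTheory.Pretriangulated ZeroObject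

universe v u

namespace Paper

variable (S : Type u) [Category.{v} S] [HasZeroObject S] [HasShift S ℤ]
  [Preadditive S] [∀ n : ℤ, (shiftFunctor S n).Additive] [Pretriangulated S]

/-- The cone of `f` lies in `P`: every completion of `f` to a distinguished triangle
has its third object in `P`. -/
def coneIn (P : Set S) {X Y : S} (f : X ⟶ Y) : Prop :=
  ∀ (Z : S) (g : Y ⟶ Z) (h : Z ⟶ X⟦(1 : ℤ)⟧),
    Triangle.mk f g h ∈ (distTriang S) → Z ∈ P

/-- A good metric on the triangulated category `S`: a descending chain of full
(iso-closed) subcategories `M i`, each containing `0`, closed under extensions, and with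
`Σ^{-1} M (i+1) ∪ M (i+1) ∪ Σ M (i+1) ⊆ M i`. -/
structure GoodMetric : Type (max u v) where
  M : ℕ → Set S
  zero_mem : ∀ i, (0 : S) ∈ M i
  iso_closed : ∀ i ⦃X Y : S⦄, (X ≅ Y) → X ∈ M i → Y ∈ M i
  anti : ∀ i, M (i + 1) ⊆ M i
  shift_mem : ∀ i ⦃X : S⦄, X ∈ M (i + 1) → X⟦(1 : ℤ)⟧ ∈ M i
  shiftNeg_mem : ∀ i ⦃X : S⦄, X ∈ M (i + 1) → X⟦(-1 : ℤ)⟧ ∈ M i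
  ext_mem : ∀ i (T : Triangle S), T ∈ (distTriang S) →
    T.obj₁ ∈ M i → T.obj₃ ∈ M i → T.obj₂ ∈ M i

variable {S}

/-- A sequence `a : ℕ ⥤ S` is Cauchy with respect to a good metric: for every `n` there
is `N` such that for all `j ≥ i ≥ N` the cone of `a i ⟶ a j` lies in `M n`. -/
def IsCauchy (μ : GoodMetric S) (a : ℕ ⥤ S) : Prop :=
  ∀ n : ℕ, ∃ N : ℕ, ∀ i j : ℕ, N ≤ i → ∀ h : i ≤ j,
    coneIn S (μ.M n) (a.map (homOfLE h))

/-- A completion of a map of sequences `f : a ⟶ b` to a sequence of distinguished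
triangles `a_* ⟶ b_* ⟶ c_* ⟶ Σ a_*`. -/
structure TriCompletion {a b : ℕ ⥤ S} (f : a ⟶ b) : Type (max u v) where
  c : ℕ ⥤ S
  g : b ⟶ c
  h : c ⟶ a ⋙ shiftFunctor S (1 : ℤ)
  dist : ∀ i, Triangle.mk (f.app i) (g.app i) (h.app i) ∈ distTriang S

/-- `f : a ⟶ b` is a type-`n` morphism of Cauchy sequences: in any completion to a
Cauchy sequence of distinguished triangles the third objects lie in `M n` eventually. -/
def IsTypeN (μ : GoodMetric S) (n : ℕ) {a b : ℕ ⥤ S} (f : a ⟶ b) : Prop :=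
  ∀ T : TriCompletion f, IsCauchy μ T.c → ∃ N, ∀ i, N ≤ i → T.c.obj i ∈ μ.M n

theorem statement0 (μ : GoodMetric S) {a' b' : ℕ ⥤ S} (f' : a' ⟶ b')
    (ha' : IsCauchy μ a') (hb' : IsCauchy μ b') (n : ℕ)
    (ρ : ℕ → ℕ) (hρ : StrictMono ρ)
    (hsub : IsTypeN μ n (Functor.whiskerLeft hρ.monotone.functor f')) :
    IsTypeN μ n f' := by
  intro T hT
  -- Restrict the completion along ρ.
  let T' : TriCompletion (Functor.whiskerLeft hρ.monotone.functor f') :=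
    { c := hρ.monotone.functor ⋙ T.c
      g := Functor.whiskerLeft hρ.monotone.functor T.g
      h := Functor.whiskerLeft hρ.monotone.functor T.h
      dist := fun i => T.dist (ρ i) }
  have hT' : IsCauchy μ T'.c := by
    intro m
    obtain ⟨N, hN⟩ := hT m
    refine ⟨N, fun i j hi hij => ?_⟩
    exact hN (ρ i) (ρ j) (le_trans hi (hρ.le_apply)) (hρ.monotone hij)
  obtain ⟨N₂, hN₂⟩ := hsub T' hT'
  obtain ⟨N₁, hN₁⟩ := hT n
  refine ⟨ρ (max N₁ N₂), fun i hi => ?_⟩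
  set K := max N₁ N₂
  have hKi : ρ K ≤ i := hi
  obtain ⟨Z, g, h, mem⟩ := distinguished_cocone_triangle (T.c.map (homOfLE hKi))
  have hZ : Z ∈ μ.M n :=
    hN₁ (ρ K) i (le_trans (le_max_left N₁ N₂) hρ.le_apply) hKi Z g h mem
  have hcK : T.c.obj (ρ K) ∈ μ.M n := hN₂ K (le_max_right N₁ N₂)
  exact μ.ext_mem n _ mem hcK hZ

end Paper
end

section
/- Let S be a triangulated category with a good metric {M_i}. Suppose that every Cauchy sequence whose transition maps are all zero has, for each n, all but finitely many terms in M_n. Then for any object F of the completion L(S) and any two Cauchy sequences a_*, b_* with colim Y(a_*) = F = colim Y(b_*), the identity map id : F → F is of type-n with respect to (a_*, b_*) for every n ≥ 1. -/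
open CategoryTheory CategoryTheory.Limits CategoryTheory.Pretriangulated ZeroObject Opposite

universe v u

namespace Paper

variable (S : Type u) [Category.{v} S] [HasZeroObject S] [HasShift S ℤ]
  [Preadditive S] [∀ n : ℤ, (shiftFunctor S n).Additive] [Pretriangulated S]

variable {S}

/-- The colimit in `Mod-S = Sᵒᵖ ⥤ AddCommGrp` of the Yoneda image of a sequence. -/
noncomputable def colimY (a : ℕ ⥤ S) : Sᵒᵖ ⥤ AddCommGrpCat.{v} :=
  colimit (a ⋙ preadditiveYoneda)

/-- The induced map on colimits of Yoneda images. -/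
noncomputable def colimYmap {a b : ℕ ⥤ S} (f : a ⟶ b) : colimY a ⟶ colimY b :=
  colimMap (Functor.whiskerRight f preadditiveYoneda)

/-- A morphism `F : colim Y(a) ⟶ colim Y(b)` in `L(S)` is of type-`n` with respect to
`(a, b)` if some map of subsequences `f : a∘ρ ⟶ b∘σ` with `F = colim Y(f)` (compatibly
with the canonical maps from the colimits over the subsequences) is a type-`n`
morphism of Cauchy sequences. -/
def MorTypeN (μ : GoodMetric S) (n : ℕ) (a b : ℕ ⥤ S)
    (F : colimY a ⟶ colimY b) : Prop :=
  ∃ (ρ σ : ℕ → ℕ) (hρ : StrictMono ρ) (hσ : StrictMono σ)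
    (f : hρ.monotone.functor ⋙ a ⟶ hσ.monotone.functor ⋙ b),
    IsTypeN μ n f ∧
      colimit.pre (a ⋙ preadditiveYoneda) hρ.monotone.functor ≫ F =
        colimMap (Functor.whiskerRight f preadditiveYoneda) ≫
          colimit.pre (b ⋙ preadditiveYoneda) hσ.monotone.functor



noncomputable instance : PreservesFilteredColimitsOfSize.{0, 0} (forget AddCommGrpCat.{v}) :=
  preservesFilteredColimitsOfSize_shrink _

lemma preadditiveYoneda_hom_ext {X : S} {G : Sᵒᵖ ⥤ AddCommGrpCat.{v}}
    (t t' : preadditiveYoneda.obj X ⟶ G)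
    (hel : t.app (op X) (𝟙 X) = t'.app (op X) (𝟙 X)) : t = t' := by
  ext Z g
  obtain ⟨Z⟩ := Z
  have h1 := congrArg (fun (q : (preadditiveYoneda.obj X).obj (op X) ⟶ G.obj (op Z)) => q (𝟙 X))
    (t.naturality (Quiver.Hom.op (g : Z ⟶ X)))
  have h2 := congrArg (fun (q : (preadditiveYoneda.obj X).obj (op X) ⟶ G.obj (op Z)) => q (𝟙 X))
    (t'.naturality (Quiver.Hom.op (g : Z ⟶ X)))
  have h3 : (preadditiveYoneda.obj X).map (Quiver.Hom.op g) (𝟙 X) = g := Category.comp_id g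
  calc t.app (op Z) g
      = t.app (op Z) ((preadditiveYoneda.obj X).map (Quiver.Hom.op g) (𝟙 X)) := by rw [h3]
    _ = G.map (Quiver.Hom.op g) (t.app (op X) (𝟙 X)) := h1
    _ = G.map (Quiver.Hom.op g) (t'.app (op X) (𝟙 X)) := by rw [hel]
    _ = t'.app (op Z) ((preadditiveYoneda.obj X).map (Quiver.Hom.op g) (𝟙 X)) := h2.symm
    _ = t'.app (op Z) g := by rw [h3]


section ColimLemmas

variable (d : ℕ ⥤ S)

/-- L3: pushing a representative further along the sequence. -/
lemma yoneda_ι_comp {X : S} {j k : ℕ} (hjk : j ≤ k) (y : X ⟶ d.obj j) :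
    preadditiveYoneda.map y ≫ colimit.ι (d ⋙ preadditiveYoneda) j
      = preadditiveYoneda.map (y ≫ d.map (homOfLE hjk)) ≫
          colimit.ι (d ⋙ preadditiveYoneda) k := by
  rw [Functor.map_comp, Category.assoc]
  congr 1
  exact (colimit.w (d ⋙ preadditiveYoneda) (homOfLE hjk)).symm

/-- L1: any map from a representable to the colimit factors through a stage. -/
lemma yoneda_colimit_exists_rep {X : S}
    (t : preadditiveYoneda.obj X ⟶ colimit (d ⋙ preadditiveYoneda)) :
    ∃ (j : ℕ) (y : X ⟶ d.obj j),
      t = preadditiveYoneda.map y ≫ colimit.ι (d ⋙ preadditiveYoneda) j := by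
  obtain ⟨j, y, hy⟩ := Concrete.colimit_exists_rep
    ((d ⋙ preadditiveYoneda) ⋙ (evaluation Sᵒᵖ AddCommGrpCat.{v}).obj (op X))
    ((colimitObjIsoColimitCompEvaluation (d ⋙ preadditiveYoneda) (op X)).hom
      (t.app (op X) (𝟙 X)))
  refine ⟨j, y, preadditiveYoneda_hom_ext _ _ ?_⟩
  have h1 : (preadditiveYoneda.map (y : X ⟶ d.obj j) ≫
        colimit.ι (d ⋙ preadditiveYoneda) j).app (op X) (𝟙 X)
      = (colimit.ι (d ⋙ preadditiveYoneda) j).app (op X) y := by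
    have hid : (preadditiveYoneda.map (y : X ⟶ d.obj j)).app (op X) (𝟙 X) = 𝟙 X ≫ y := rfl
    calc (preadditiveYoneda.map (y : X ⟶ d.obj j) ≫
          colimit.ι (d ⋙ preadditiveYoneda) j).app (op X) (𝟙 X)
        = (colimit.ι (d ⋙ preadditiveYoneda) j).app (op X)
            ((preadditiveYoneda.map (y : X ⟶ d.obj j)).app (op X) (𝟙 X)) := rfl
      _ = (colimit.ι (d ⋙ preadditiveYoneda) j).app (op X) y := by
          rw [hid]; exact congrArg _ (Category.id_comp _)
  rw [h1]
  have h2 := congrArg (fun (q : _ ⟶ _) => (q : _ → _) (y : X ⟶ d.obj j))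
    (colimitObjIsoColimitCompEvaluation_ι_inv (d ⋙ preadditiveYoneda) j (op X))
  dsimp at h2
  calc t.app (op X) (𝟙 X)
      = (colimitObjIsoColimitCompEvaluation (d ⋙ preadditiveYoneda) (op X)).inv
        ((colimitObjIsoColimitCompEvaluation (d ⋙ preadditiveYoneda) (op X)).hom
          (t.app (op X) (𝟙 X))) := by
        show _ = ((colimitObjIsoColimitCompEvaluation (d ⋙ preadditiveYoneda) (op X)).hom ≫
          (colimitObjIsoColimitCompEvaluation (d ⋙ preadditiveYoneda) (op X)).inv)
            (t.app (op X) (𝟙 X))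
        rw [Iso.hom_inv_id]; rfl
    _ = (colimitObjIsoColimitCompEvaluation (d ⋙ preadditiveYoneda) (op X)).inv
          (colimit.ι ((d ⋙ preadditiveYoneda) ⋙ (evaluation Sᵒᵖ AddCommGrpCat.{v}).obj (op X)) j y)
        := by rw [hy]
    _ = (colimit.ι (d ⋙ preadditiveYoneda) j).app (op X) y := h2

/-- app at the identity of a composite with a Yoneda map. -/
lemma yoneda_comp_app_id {X W : S} {G : Sᵒᵖ ⥤ AddCommGrpCat.{v}} (y : X ⟶ W)
    (s : preadditiveYoneda.obj W ⟶ G) :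
    (preadditiveYoneda.map y ≫ s).app (op X) (𝟙 X) = s.app (op X) y := by
  calc (preadditiveYoneda.map y ≫ s).app (op X) (𝟙 X)
      = s.app (op X) ((preadditiveYoneda.map y).app (op X) (𝟙 X)) := rfl
    _ = s.app (op X) y := by
        have hid : (preadditiveYoneda.map y).app (op X) (𝟙 X) = 𝟙 X ≫ y := rfl
        rw [hid, Category.id_comp]

/-- L2: equal in the colimit implies equal at a later stage. -/
lemma yoneda_colimit_rep_eq {X : S} {j j' : ℕ} (y : X ⟶ d.obj j) (y' : X ⟶ d.obj j')
    (hyy : preadditiveYoneda.map y ≫ colimit.ι (d ⋙ preadditiveYoneda) j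
         = preadditiveYoneda.map y' ≫ colimit.ι (d ⋙ preadditiveYoneda) j') :
    ∃ (k : ℕ) (hjk : j ≤ k) (hj'k : j' ≤ k),
      y ≫ d.map (homOfLE hjk) = y' ≫ d.map (homOfLE hj'k) := by
  have e1 : (colimit.ι (d ⋙ preadditiveYoneda) j).app (op X) y
      = (colimit.ι (d ⋙ preadditiveYoneda) j').app (op X) y' := by
    have e0 := congrArg
      (fun (q : preadditiveYoneda.obj X ⟶ colimit (d ⋙ preadditiveYoneda)) =>
        q.app (op X) (𝟙 X)) hyy
    dsimp at e0
    exact ((yoneda_comp_app_id y _).symm.trans e0).trans (yoneda_comp_app_id y' _)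
  have c1 : ∀ (l : ℕ) (z : X ⟶ d.obj l),
      (colimitObjIsoColimitCompEvaluation (d ⋙ preadditiveYoneda) (op X)).hom
          ((colimit.ι (d ⋙ preadditiveYoneda) l).app (op X) z)
        = colimit.ι ((d ⋙ preadditiveYoneda) ⋙ (evaluation Sᵒᵖ AddCommGrpCat.{v}).obj (op X)) l z
      := by
    intro l z
    show ((colimit.ι (d ⋙ preadditiveYoneda) l).app (op X) ≫
      (colimitObjIsoColimitCompEvaluation (d ⋙ preadditiveYoneda) (op X)).hom) z = _
    rw [colimitObjIsoColimitCompEvaluation_ι_app_hom]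
  have e2 : colimit.ι ((d ⋙ preadditiveYoneda) ⋙ (evaluation Sᵒᵖ AddCommGrpCat.{v}).obj (op X)) j y
      = colimit.ι ((d ⋙ preadditiveYoneda) ⋙ (evaluation Sᵒᵖ AddCommGrpCat.{v}).obj (op X)) j' y'
      := by
    rw [← c1 j y, ← c1 j' y', e1]
  obtain ⟨k, u, u', he⟩ := Concrete.colimit_exists_of_rep_eq
    ((d ⋙ preadditiveYoneda) ⋙ (evaluation Sᵒᵖ AddCommGrpCat.{v}).obj (op X)) _ _ e2
  refine ⟨k, leOfHom u, leOfHom u', ?_⟩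
  have hm : ∀ (l : ℕ) (w : l ⟶ k) (z : X ⟶ d.obj l),
      (((d ⋙ preadditiveYoneda) ⋙ (evaluation Sᵒᵖ AddCommGrpCat.{v}).obj (op X)).map w) z
        = z ≫ d.map (homOfLE (leOfHom w)) := by
    intro l w z
    have : w = homOfLE (leOfHom w) := Subsingleton.elim _ _
    rw [← this]
    rfl
  rw [hm j u y, hm j' u' y'] at he
  exact he

/-- Strictly monotone reindexings give final functors. -/
lemma final_of_strictMono {ρ : ℕ → ℕ} (hρ : StrictMono ρ) : hρ.monotone.functor.Final :=
  Functor.final_of_exists_of_isFiltered _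
    (fun i => ⟨i, ⟨homOfLE (hρ.le_apply)⟩⟩)
    (fun {i} {l} s s' => ⟨l, 𝟙 l, Subsingleton.elim _ _⟩)

/-- Composing transition maps of an `ℕ`-indexed functor. -/
lemma map_comp_le (e : ℕ ⥤ S) {i j k : ℕ} (hij : i ≤ j) (hjk : j ≤ k) :
    e.map (homOfLE hij) ≫ e.map (homOfLE hjk) = e.map (homOfLE (hij.trans hjk)) := by
  rw [← e.map_comp, homOfLE_comp]

end ColimLemmas


/-- Lemma 3.979: if every Cauchy sequence with vanishing transition maps
has, for each `n`, all but finitely many terms in `M n`, then for any object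
`F = colim Y(a) = colim Y(b)` of the completion the identity map is of type-`n`
with respect to `(a, b)` for every `n ≥ 1`. -/
theorem statement3 (μ : GoodMetric S)
    (hzero : ∀ c : ℕ ⥤ S, IsCauchy μ c →
      (∀ i, c.map (homOfLE (Nat.le_succ i)) = 0) →
      ∀ n : ℕ, ∃ N, ∀ i, N ≤ i → c.obj i ∈ μ.M n)
    {a b : ℕ ⥤ S} (ha : IsCauchy μ a) (hb : IsCauchy μ b)
    (h : colimY a = colimY b) (n : ℕ) (hn : 1 ≤ n) :
    MorTypeN μ n a b (eqToHom h) := by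
  classical
  obtain ⟨F, hF⟩ : ∃ F : colimit (a ⋙ preadditiveYoneda) ⟶ colimit (b ⋙ preadditiveYoneda),
      F = eqToHom h := ⟨eqToHom h, rfl⟩
  -- Step I: represent the identity stage-wise
  have hrep : ∀ i : ℕ, ∃ (j : ℕ) (y : a.obj i ⟶ b.obj j),
      colimit.ι (a ⋙ preadditiveYoneda) i ≫ F
        = preadditiveYoneda.map y ≫ colimit.ι (b ⋙ preadditiveYoneda) j := fun i =>
    yoneda_colimit_exists_rep b (colimit.ι (a ⋙ preadditiveYoneda) i ≫ F)
  choose jj yy hy using hrep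
  have hcomp : ∀ i : ℕ, ∃ (k : ℕ) (h1 : jj i ≤ k) (h2 : jj (i+1) ≤ k),
      yy i ≫ b.map (homOfLE h1)
        = (a.map (homOfLE (Nat.le_succ i)) ≫ yy (i+1)) ≫ b.map (homOfLE h2) := by
    intro i
    apply yoneda_colimit_rep_eq b
    calc preadditiveYoneda.map (yy i) ≫ colimit.ι (b ⋙ preadditiveYoneda) (jj i)
        = colimit.ι (a ⋙ preadditiveYoneda) i ≫ F := (hy i).symm
      _ = (preadditiveYoneda.map (a.map (homOfLE (Nat.le_succ i))) ≫
            colimit.ι (a ⋙ preadditiveYoneda) (i+1)) ≫ F := by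
          rw [show preadditiveYoneda.map (a.map (homOfLE (Nat.le_succ i))) ≫
              colimit.ι (a ⋙ preadditiveYoneda) (i+1)
              = colimit.ι (a ⋙ preadditiveYoneda) i from
            colimit.w (a ⋙ preadditiveYoneda) (homOfLE (Nat.le_succ i))]
      _ = preadditiveYoneda.map (a.map (homOfLE (Nat.le_succ i))) ≫
            (preadditiveYoneda.map (yy (i+1)) ≫
              colimit.ι (b ⋙ preadditiveYoneda) (jj (i+1))) := by
          rw [Category.assoc, hy (i+1)]
      _ = preadditiveYoneda.map (a.map (homOfLE (Nat.le_succ i)) ≫ yy (i+1)) ≫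
            colimit.ι (b ⋙ preadditiveYoneda) (jj (i+1)) := by
          rw [Functor.map_comp, Category.assoc]
  choose K hK1 hK2 hKc using hcomp
  -- the reindexing σ
  let σ : ℕ → ℕ := fun m => Nat.rec (jj 0) (fun m σm => max (max (σm + 1) (K m)) (jj (m+1))) m
  have hσs : ∀ m, σ (m+1) = max (max (σ m + 1) (K m)) (jj (m+1)) := fun _ => rfl
  have hσmono : StrictMono σ := strictMono_nat_of_lt_succ (fun m => by
    rw [hσs m]
    exact lt_of_lt_of_le (Nat.lt_succ_self _) (le_trans (le_max_left _ _) (le_max_left _ _)))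
  have hjσ : ∀ m, jj m ≤ σ m := by
    intro m
    cases m with
    | zero => exact le_refl _
    | succ m => rw [hσs m]; exact le_max_right _ _
  have hKσ : ∀ m, K m ≤ σ (m+1) := fun m => by
    rw [hσs m]; exact le_trans (le_max_right _ _) (le_max_left _ _)
  -- components of the natural transformation
  obtain ⟨fc, hfc⟩ : ∃ fc : ∀ m : ℕ, a.obj m ⟶ b.obj (σ m),
      ∀ m, fc m = yy m ≫ b.map (homOfLE (hjσ m)) :=
    ⟨fun m => yy m ≫ b.map (homOfLE (hjσ m)), fun _ => rfl⟩
  have hfckey : ∀ m, a.map (homOfLE (Nat.le_succ m)) ≫ fc (m+1)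
      = fc m ≫ b.map (homOfLE (hσmono.monotone (Nat.le_succ m))) := by
    intro m
    have e1 := congrArg (fun q => q ≫ b.map (homOfLE (hKσ m))) (hKc m)
    dsimp at e1
    simp only [Category.assoc] at e1
    rw [map_comp_le b (hK1 m) (hKσ m), map_comp_le b (hK2 m) (hKσ m)] at e1
    rw [hfc (m+1), hfc m]
    rw [Category.assoc, map_comp_le b (hjσ m) (hσmono.monotone (Nat.le_succ m))]
    exact e1.symm
  have hnat : ∀ (m m' : ℕ) (hmm : m ≤ m'),
      a.map (homOfLE hmm) ≫ fc m' = fc m ≫ b.map (homOfLE (hσmono.monotone hmm)) := by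
    intro m m' hmm
    induction m', hmm using Nat.le_induction with
    | base =>
        show a.map (𝟙 m) ≫ fc m = fc m ≫ b.map (𝟙 (σ m))
        rw [CategoryTheory.Functor.map_id, CategoryTheory.Functor.map_id,
          Category.id_comp, Category.comp_id]
    | succ m' hm IH =>
        rw [← map_comp_le a hm (Nat.le_succ m'), Category.assoc, hfckey m',
          ← Category.assoc, IH, Category.assoc,
          map_comp_le b (hσmono.monotone hm) (hσmono.monotone (Nat.le_succ m'))]
  -- assemble the natural transformation
  let fnat : strictMono_id.monotone.functor ⋙ a ⟶ hσmono.monotone.functor ⋙ b :=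
    { app := fun m => fc m
      naturality := fun m m' u => hnat m m' (leOfHom u) }
  -- the colimit compatibility
  have hE : colimit.pre (a ⋙ preadditiveYoneda) strictMono_id.monotone.functor ≫ F =
      colimMap (Functor.whiskerRight fnat preadditiveYoneda) ≫
        colimit.pre (b ⋙ preadditiveYoneda) hσmono.monotone.functor := by
    apply colimit.hom_ext
    intro m
    rw [← Category.assoc, colimit.ι_pre, ← Category.assoc, ι_colimMap, Category.assoc]
    have l2 : colimit.ι ((hσmono.monotone.functor ⋙ b) ⋙ preadditiveYoneda) m ≫
          colimit.pre (b ⋙ preadditiveYoneda) hσmono.monotone.functor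
        = colimit.ι (b ⋙ preadditiveYoneda) (σ m) :=
      colimit.ι_pre (b ⋙ preadditiveYoneda) hσmono.monotone.functor m
    rw [l2]
    have l3 : (Functor.whiskerRight fnat preadditiveYoneda).app m = preadditiveYoneda.map (fc m) := rfl
    rw [l3, hfc m]
    exact (hy m).trans (yoneda_ι_comp b (hjσ m) (yy m))
  rw [← hF]
  refine ⟨id, σ, strictMono_id, hσmono, fnat, ?_, hE⟩
  -- Step II : `fnat` is a type-n morphism
  intro T hc
  haveI hfinρ : (strictMono_id (α := ℕ)).monotone.functor.Final := final_of_strictMono (strictMono_id (α := ℕ))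
  haveI hfinσ : hσmono.monotone.functor.Final := final_of_strictMono hσmono
  haveI hFi : IsIso F := by
    rw [hF]
    exact ⟨eqToHom h.symm, (eqToHom_trans h h.symm).trans (eqToHom_refl _ _),
      (eqToHom_trans h.symm h).trans (eqToHom_refl _ _)⟩
  set Φ := colimMap (Functor.whiskerRight fnat preadditiveYoneda) with hΦdef
  have hΦeq : Φ = (colimit.pre (a ⋙ preadditiveYoneda) strictMono_id.monotone.functor ≫ F) ≫
      inv (colimit.pre (b ⋙ preadditiveYoneda) hσmono.monotone.functor) := by
    rw [hE, Category.assoc, IsIso.hom_inv_id, Category.comp_id]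
  haveI hΦi : IsIso Φ := by rw [hΦeq]; infer_instance
  -- injectivity-type statement
  have hB : ∀ (X : S) (k : ℕ) (z : X ⟶ (strictMono_id.monotone.functor ⋙ a).obj k),
      z ≫ fnat.app k = 0 → ∃ (k' : ℕ) (hk : k ≤ k'),
        z ≫ (strictMono_id.monotone.functor ⋙ a).map (homOfLE hk) = 0 := by
    intro X k z hz
    have e3 : ∀ (w : X ⟶ (strictMono_id.monotone.functor ⋙ a).obj k),
        (preadditiveYoneda.map w ≫
            colimit.ι ((strictMono_id.monotone.functor ⋙ a) ⋙ preadditiveYoneda) k) ≫ Φ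
          = preadditiveYoneda.map (w ≫ fnat.app k) ≫
              colimit.ι ((hσmono.monotone.functor ⋙ b) ⋙ preadditiveYoneda) k := by
      intro w
      rw [hΦdef, Category.assoc, ι_colimMap, Functor.whiskerRight_app, ← Category.assoc,
        ← CategoryTheory.Functor.map_comp]
    have hz0 : preadditiveYoneda.map z ≫
        colimit.ι ((strictMono_id.monotone.functor ⋙ a) ⋙ preadditiveYoneda) k
        = preadditiveYoneda.map (0 : X ⟶ (strictMono_id.monotone.functor ⋙ a).obj k) ≫
            colimit.ι ((strictMono_id.monotone.functor ⋙ a) ⋙ preadditiveYoneda) k := by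
      rw [← cancel_mono Φ, e3 z, e3 0, hz, Limits.zero_comp]
    obtain ⟨k', hk1, hk2, he⟩ :=
      yoneda_colimit_rep_eq (strictMono_id.monotone.functor ⋙ a) z 0 hz0
    refine ⟨k', hk1, ?_⟩
    rw [Limits.zero_comp] at he
    exact he
  -- surjectivity-type statement
  have hA : ∀ (X : S) (k : ℕ) (w : X ⟶ (hσmono.monotone.functor ⋙ b).obj k),
      ∃ (k' : ℕ) (hk : k ≤ k') (z : X ⟶ (strictMono_id.monotone.functor ⋙ a).obj k'),
        z ≫ fnat.app k' = w ≫ (hσmono.monotone.functor ⋙ b).map (homOfLE hk) := by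
    intro X k w
    obtain ⟨k₀, z₀, hz₀⟩ := yoneda_colimit_exists_rep (strictMono_id.monotone.functor ⋙ a)
      (preadditiveYoneda.map w ≫
        colimit.ι ((hσmono.monotone.functor ⋙ b) ⋙ preadditiveYoneda) k ≫ inv Φ)
    have e4 : preadditiveYoneda.map w ≫
        colimit.ι ((hσmono.monotone.functor ⋙ b) ⋙ preadditiveYoneda) k
        = preadditiveYoneda.map (z₀ ≫ fnat.app k₀) ≫
            colimit.ι ((hσmono.monotone.functor ⋙ b) ⋙ preadditiveYoneda) k₀ := by
      have e5 := congrArg (fun q => q ≫ Φ) hz₀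
      rw [Category.assoc, Category.assoc, IsIso.inv_hom_id, Category.comp_id] at e5
      rw [e5, Category.assoc, hΦdef, ι_colimMap, Functor.whiskerRight_app, ← Category.assoc,
        ← CategoryTheory.Functor.map_comp]
    obtain ⟨k', hkk', hk₀k', he⟩ := yoneda_colimit_rep_eq (hσmono.monotone.functor ⋙ b)
      w (z₀ ≫ fnat.app k₀) e4
    refine ⟨k', hkk', z₀ ≫ (strictMono_id.monotone.functor ⋙ a).map (homOfLE hk₀k'), ?_⟩
    calc (z₀ ≫ (strictMono_id.monotone.functor ⋙ a).map (homOfLE hk₀k')) ≫ fnat.app k'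
        = z₀ ≫ ((strictMono_id.monotone.functor ⋙ a).map (homOfLE hk₀k') ≫ fnat.app k') :=
          Category.assoc _ _ _
      _ = z₀ ≫ (fnat.app k₀ ≫ (hσmono.monotone.functor ⋙ b).map (homOfLE hk₀k')) := by
          rw [fnat.naturality (homOfLE hk₀k')]
      _ = (z₀ ≫ fnat.app k₀) ≫ (hσmono.monotone.functor ⋙ b).map (homOfLE hk₀k') :=
          (Category.assoc _ _ _).symm
      _ = w ≫ (hσmono.monotone.functor ⋙ b).map (homOfLE hkk') := he.symm
  -- transition maps of the cone sequence are eventually zero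
  have hzt : ∀ i : ℕ, ∃ (jz : ℕ) (hij : i ≤ jz), T.c.map (homOfLE hij) = 0 := by
    intro i
    have s1 : T.h.app i ≫ (shiftFunctor S (1 : ℤ)).map (fnat.app i) = 0 :=
      comp_distTriang_mor_zero₃₁ _ (T.dist i)
    let e := shiftFunctorCompIsoId S (1 : ℤ) (-1 : ℤ) (by norm_num)
    let u' : (T.c.obj i)⟦(-1 : ℤ)⟧ ⟶ (strictMono_id.monotone.functor ⋙ a).obj i :=
      (shiftFunctor S (-1 : ℤ)).map (T.h.app i) ≫
        e.hom.app ((strictMono_id.monotone.functor ⋙ a).obj i)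
    have nat1 : (shiftFunctor S (-1 : ℤ)).map ((shiftFunctor S (1 : ℤ)).map (fnat.app i)) ≫
        e.hom.app ((hσmono.monotone.functor ⋙ b).obj i)
        = e.hom.app ((strictMono_id.monotone.functor ⋙ a).obj i) ≫ fnat.app i :=
      e.hom.naturality (fnat.app i)
    have hu'f : u' ≫ fnat.app i = 0 := by
      calc u' ≫ fnat.app i
          = (shiftFunctor S (-1 : ℤ)).map (T.h.app i) ≫
              (e.hom.app ((strictMono_id.monotone.functor ⋙ a).obj i) ≫ fnat.app i) :=
            Category.assoc _ _ _
        _ = (shiftFunctor S (-1 : ℤ)).map (T.h.app i) ≫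
              ((shiftFunctor S (-1 : ℤ)).map ((shiftFunctor S (1 : ℤ)).map (fnat.app i)) ≫
                e.hom.app ((hσmono.monotone.functor ⋙ b).obj i)) := by rw [nat1]
        _ = ((shiftFunctor S (-1 : ℤ)).map (T.h.app i) ≫
              (shiftFunctor S (-1 : ℤ)).map ((shiftFunctor S (1 : ℤ)).map (fnat.app i))) ≫
              e.hom.app ((hσmono.monotone.functor ⋙ b).obj i) := (Category.assoc _ _ _).symm
        _ = (shiftFunctor S (-1 : ℤ)).map
              (T.h.app i ≫ (shiftFunctor S (1 : ℤ)).map (fnat.app i)) ≫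
              e.hom.app ((hσmono.monotone.functor ⋙ b).obj i) := by
            rw [CategoryTheory.Functor.map_comp]
        _ = (shiftFunctor S (-1 : ℤ)).map (0 : T.c.obj i ⟶ _) ≫
              e.hom.app ((hσmono.monotone.functor ⋙ b).obj i) := by rw [s1]
        _ = 0 := by rw [CategoryTheory.Functor.map_zero, Limits.zero_comp]
    obtain ⟨j₁, hij₁, hu'0⟩ := hB _ i u' hu'f
    have nat2 : (shiftFunctor S (-1 : ℤ)).map ((shiftFunctor S (1 : ℤ)).map
          ((strictMono_id.monotone.functor ⋙ a).map (homOfLE hij₁))) ≫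
        e.hom.app ((strictMono_id.monotone.functor ⋙ a).obj j₁)
        = e.hom.app ((strictMono_id.monotone.functor ⋙ a).obj i) ≫
            (strictMono_id.monotone.functor ⋙ a).map (homOfLE hij₁) :=
      e.hom.naturality ((strictMono_id.monotone.functor ⋙ a).map (homOfLE hij₁))
    have s4 : T.h.app i ≫ (shiftFunctor S (1 : ℤ)).map
        ((strictMono_id.monotone.functor ⋙ a).map (homOfLE hij₁)) = 0 := by
      apply (shiftFunctor S (-1 : ℤ)).map_injective
      rw [CategoryTheory.Functor.map_comp, CategoryTheory.Functor.map_zero,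
        ← cancel_mono (e.hom.app ((strictMono_id.monotone.functor ⋙ a).obj j₁)),
        Category.assoc, nat2, Limits.zero_comp, ← Category.assoc]
      show u' ≫ (strictMono_id.monotone.functor ⋙ a).map (homOfLE hij₁) = 0
      exact hu'0
    have s5 : T.c.map (homOfLE hij₁) ≫ T.h.app j₁ = 0 :=
      (T.h.naturality (homOfLE hij₁)).trans s4
    obtain ⟨w, hw0⟩ := Triangle.coyoneda_exact₃ _ (T.dist j₁) (T.c.map (homOfLE hij₁)) s5
    have hw : T.c.map (homOfLE hij₁) = w ≫ T.g.app j₁ := hw0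
    obtain ⟨k, hj₁k, z, hzf⟩ := hA (T.c.obj i) j₁ w
    refine ⟨k, hij₁.trans hj₁k, ?_⟩
    have gnat : (hσmono.monotone.functor ⋙ b).map (homOfLE hj₁k) ≫ T.g.app k
        = T.g.app j₁ ≫ T.c.map (homOfLE hj₁k) := T.g.naturality (homOfLE hj₁k)
    calc T.c.map (homOfLE (hij₁.trans hj₁k))
        = T.c.map (homOfLE hij₁) ≫ T.c.map (homOfLE hj₁k) :=
          (map_comp_le T.c hij₁ hj₁k).symm
      _ = (w ≫ T.g.app j₁) ≫ T.c.map (homOfLE hj₁k) := by rw [hw]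
      _ = w ≫ (T.g.app j₁ ≫ T.c.map (homOfLE hj₁k)) := Category.assoc _ _ _
      _ = w ≫ ((hσmono.monotone.functor ⋙ b).map (homOfLE hj₁k) ≫ T.g.app k) :=
          congrArg (fun q => w ≫ q) gnat.symm
      _ = (w ≫ (hσmono.monotone.functor ⋙ b).map (homOfLE hj₁k)) ≫ T.g.app k :=
          (Category.assoc _ _ _).symm
      _ = (z ≫ fnat.app k) ≫ T.g.app k := congrArg (fun q => q ≫ T.g.app k) hzf.symm
      _ = z ≫ (fnat.app k ≫ T.g.app k) := Category.assoc _ _ _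
      _ = z ≫ 0 := by
          have hz12 : fnat.app k ≫ T.g.app k = 0 := comp_distTriang_mor_zero₁₂ _ (T.dist k)
          rw [hz12]
      _ = 0 := Limits.comp_zero
  -- extract a subsequence with vanishing transition maps
  choose JJ hJJle hJJzero using hzt
  let ρ' : ℕ → ℕ := fun m => Nat.rec 0 (fun _ r => max (JJ r) r + 1) m
  have hρ's : ∀ m, ρ' (m+1) = max (JJ (ρ' m)) (ρ' m) + 1 := fun _ => rfl
  have hρ'mono : StrictMono ρ' := strictMono_nat_of_lt_succ (fun m => by
    rw [hρ's m]; exact Nat.lt_succ_of_le (le_max_right _ _))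
  have hρ'zero : ∀ m, T.c.map (homOfLE (hρ'mono.monotone (Nat.le_succ m))) = 0 := by
    intro m
    have hle1 : ρ' m ≤ JJ (ρ' m) := hJJle (ρ' m)
    have hle2 : JJ (ρ' m) ≤ ρ' (m+1) := by
      rw [hρ's m]; exact Nat.le_succ_of_le (le_max_left _ _)
    rw [← map_comp_le T.c hle1 hle2, hJJzero (ρ' m), Limits.zero_comp]
  -- the subsequence is Cauchy
  have hc' : IsCauchy μ (hρ'mono.monotone.functor ⋙ T.c) := by
    intro n'
    obtain ⟨N, hN⟩ := hc n'
    refine ⟨N, fun i2 j2 hNi hij2 => ?_⟩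
    exact hN (ρ' i2) (ρ' j2) (le_trans hNi hρ'mono.le_apply) (hρ'mono.monotone hij2)
  have hz' : ∀ i2 : ℕ, (hρ'mono.monotone.functor ⋙ T.c).map (homOfLE (Nat.le_succ i2)) = 0 :=
    fun i2 => hρ'zero i2
  obtain ⟨N₁, hN₁⟩ := hzero (hρ'mono.monotone.functor ⋙ T.c) hc' hz' (n+1)
  obtain ⟨N₂, hN₂⟩ := hc (n+1)
  refine ⟨N₂, fun i hi => ?_⟩
  have him : i ≤ ρ' (max i N₁) := le_trans (le_max_left _ _) hρ'mono.le_apply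
  obtain ⟨Z, g', h', hdist⟩ := Pretriangulated.distinguished_cocone_triangle
    (T.c.map (homOfLE him))
  have hZ : Z ∈ μ.M (n+1) := hN₂ i (ρ' (max i N₁)) hi him Z g' h' hdist
  have hcm : T.c.obj (ρ' (max i N₁)) ∈ μ.M (n+1) := hN₁ (max i N₁) (le_max_right _ _)
  exact μ.ext_mem n _ (inv_rot_of_distTriang _ hdist) (μ.shiftNeg_mem n hZ) (μ.anti n hcm)

end Paper
end

section
/- Let S be a triangulated category with a good metric {M_i}. In Mod-S the right orthogonal of Y(M_i) equals the right orthogonal of L_i: that is, an object X of Mod-S satisfies Hom(Y(m), X) = 0 for all m ∈ M_i if and only if Hom(F, X) = 0 for every F ∈ L_i. Moreover, for a representable object Y(s), one has Hom(Y(s), Y(m)) = 0 for all m ∈ M_i if and only if Hom(Y(s), F) = 0 for all F ∈ L_i. -/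
open CategoryTheory CategoryTheory.Limits CategoryTheory.Pretriangulated ZeroObject

universe v u

namespace Paper

variable (S : Type u) [Category.{v} S] [HasZeroObject S] [HasShift S ℤ]
  [Preadditive S] [∀ n : ℤ, (shiftFunctor S n).Additive] [Pretriangulated S]

variable {S}

/-- Membership in `L_P`: colimits of Yoneda images of Cauchy sequences contained in `P`. -/
def InLsub (μ : GoodMetric S) (P : Set S) (X : Sᵒᵖ ⥤ AddCommGrpCat.{v}) : Prop :=
  ∃ a : ℕ ⥤ S, IsCauchy μ a ∧ (∀ i, a.obj i ∈ P) ∧ Nonempty (colimY a ≅ X)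

/-- Membership in `L(S)`: colimits of Yoneda images of Cauchy sequences. -/
def InL (μ : GoodMetric S) (X : Sᵒᵖ ⥤ AddCommGrpCat.{v}) : Prop :=
  ∃ a : ℕ ⥤ S, IsCauchy μ a ∧ Nonempty (colimY a ≅ X)

/-- Membership in `𝔖(S) = L(S) ∩ ⋃ₙ Y(Mₙ)^⊥`. -/
def InFrak (μ : GoodMetric S) (X : Sᵒᵖ ⥤ AddCommGrpCat.{v}) : Prop :=
  InL μ X ∧ ∃ n, ∀ m ∈ μ.M n, ∀ φ : preadditiveYoneda.obj m ⟶ X, φ = 0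

/-- Membership in `N_i = L_i ∩ 𝔖(S)`. -/
def InN (μ : GoodMetric S) (i : ℕ) (X : Sᵒᵖ ⥤ AddCommGrpCat.{v}) : Prop :=
  InLsub μ (μ.M i) X ∧ InFrak μ X

/-- A Cauchy sequence of distinguished triangles in `S`. -/
structure CauchyTriSeq (μ : GoodMetric S) : Type (max u v) where
  a : ℕ ⥤ S
  b : ℕ ⥤ S
  f : a ⟶ b
  ha : IsCauchy μ a
  hb : IsCauchy μ b
  comp : TriCompletion f
  hc : IsCauchy μ comp.c

/-- `(A, B, C, u, v)` underlies a strong triangle in `L(S)`: it is isomorphic to the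
colimit of the Yoneda image of a Cauchy sequence of distinguished triangles. -/
def StrongTriangleOn (μ : GoodMetric S) (A B C : Sᵒᵖ ⥤ AddCommGrpCat.{v})
    (u : A ⟶ B) (v : B ⟶ C) : Prop :=
  ∃ (T : CauchyTriSeq μ) (eA : colimY T.a ≅ A) (eB : colimY T.b ≅ B)
    (eC : colimY T.comp.c ≅ C),
    colimYmap T.f ≫ eB.hom = eA.hom ≫ u ∧
    colimYmap T.comp.g ≫ eC.hom = eB.hom ≫ v


section Aux

/-- A map out of a preadditive-Yoneda representable is determined by its value on `𝟙 s`. -/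
lemma preadditiveYoneda_hom_ext_s5 {s : S} {F : Sᵒᵖ ⥤ AddCommGrpCat.{v}}
    (φ ψ : preadditiveYoneda.obj s ⟶ F)
    (h : φ.app (Opposite.op s) (𝟙 s) = ψ.app (Opposite.op s) (𝟙 s)) : φ = ψ := by
  ext X (f : (X.unop : S) ⟶ s)
  have hφ := congrArg (fun (t : (_ : AddCommGrpCat.{v}) ⟶ _) => ConcreteCategory.hom t (𝟙 s)) (φ.naturality f.op)
  have hψ := congrArg (fun (t : (_ : AddCommGrpCat.{v}) ⟶ _) => ConcreteCategory.hom t (𝟙 s)) (ψ.naturality f.op)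
  dsimp at hφ hψ
  have hφ' : (φ.app X) (f ≫ 𝟙 s) = (F.map f.op) ((φ.app (Opposite.op s)) (𝟙 s)) := hφ
  have hψ' : (ψ.app X) (f ≫ 𝟙 s) = (F.map f.op) ((ψ.app (Opposite.op s)) (𝟙 s)) := hψ
  rw [Category.comp_id] at hφ' hψ' 
  rw [hφ', hψ', h]

/-- Any map from a representable into `colimY a` factors through a stage. -/
lemma exists_factor (a : ℕ ⥤ S) (s : S) (φ : preadditiveYoneda.obj s ⟶ colimY a) :
    ∃ (j : ℕ) (g : s ⟶ a.obj j),
      φ = preadditiveYoneda.map g ≫ colimit.ι (a ⋙ preadditiveYoneda) j := by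
  let e := colimitObjIsoColimitCompEvaluation (a ⋙ preadditiveYoneda) (Opposite.op s)
  haveI : PreservesFilteredColimitsOfSize.{0, 0} (forget AddCommGrpCat.{v}) :=
    preservesSmallestFilteredColimits_of_preservesFilteredColimits _
  obtain ⟨j, g, hg⟩ := Concrete.colimit_exists_rep
    ((a ⋙ preadditiveYoneda) ⋙ (evaluation Sᵒᵖ AddCommGrpCat).obj (Opposite.op s))
    (e.hom (φ.app (Opposite.op s) (𝟙 s)))
  refine ⟨j, g, (preadditiveYoneda_hom_ext_s5 _ _ ?_).symm⟩
  have h1 : (preadditiveYoneda.map g ≫ colimit.ι (a ⋙ preadditiveYoneda) j).app (Opposite.op s) (𝟙 s) =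
      (colimit.ι (a ⋙ preadditiveYoneda) j).app (Opposite.op s) (𝟙 s ≫ g) := rfl
  refine h1.trans ?_
  have h2 := colimitObjIsoColimitCompEvaluation_ι_inv (a ⋙ preadditiveYoneda) j (Opposite.op s)
  have h3 := congrArg (fun (t : (_ : AddCommGrpCat.{v}) ⟶ _) => ConcreteCategory.hom t g) h2
  simp only [AddCommGrpCat.coe_comp, Function.comp_apply] at h3
  have h4 : (colimit.ι ((a ⋙ preadditiveYoneda) ⋙ (evaluation Sᵒᵖ AddCommGrpCat).obj (Opposite.op s)) j) g =
      e.hom (φ.app (Opposite.op s) (𝟙 s)) := hg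
  calc (colimit.ι (a ⋙ preadditiveYoneda) j).app (Opposite.op s) (𝟙 s ≫ g)
      = (colimit.ι (a ⋙ preadditiveYoneda) j).app (Opposite.op s) g := by erw [Category.id_comp]
    _ = e.inv ((colimit.ι ((a ⋙ preadditiveYoneda) ⋙ (evaluation Sᵒᵖ AddCommGrpCat).obj (Opposite.op s)) j) g) :=
        h3.symm
    _ = e.inv (e.hom (φ.app (Opposite.op s) (𝟙 s))) := by rw [h4]
    _ = (show ToType ((colimit (a ⋙ preadditiveYoneda)).obj (Opposite.op s)) from φ.app (Opposite.op s) (𝟙 s)) := 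
        congrArg (fun (t : (_ : AddCommGrpCat.{v}) ⟶ _) => ConcreteCategory.hom t (φ.app (Opposite.op s) (𝟙 s))) e.hom_inv_id

/-- Constant sequences are Cauchy. -/
lemma const_isCauchy (μ : GoodMetric S) (m : S) :
    IsCauchy μ ((Functor.const ℕ).obj m) := by
  intro n
  refine ⟨0, fun i j _ h Z g hmap hT => ?_⟩
  have hIso : IsIso (Triangle.mk (((Functor.const ℕ).obj m).map (homOfLE h)) g hmap).mor₁ := by
    dsimp only [Triangle.mk_mor₁, Functor.const_obj_map]
    exact inferInstanceAs (IsIso (𝟙 m))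
  have hz := Triangle.isZero₃_of_isIso₁ _ hT hIso
  exact μ.iso_closed n (hz.isoZero).symm (μ.zero_mem n)

/-- The cocone over the Yoneda image of a constant sequence with point `Y m`. -/
noncomputable def constCocone (m : S) :
    Cocone ((Functor.const ℕ).obj m ⋙ preadditiveYoneda) where
  pt := preadditiveYoneda.obj m
  ι := { app := fun _ => 𝟙 _
         naturality := by
           intro i j f
           simp [Functor.const_obj_map] }

/-- The colimit of the Yoneda image of a constant sequence is the representable. -/
noncomputable def colimYConstIso (m : S) :
    colimY ((Functor.const ℕ).obj m) ≅ preadditiveYoneda.obj m where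
  hom := colimit.desc _ (constCocone m)
  inv := colimit.ι ((Functor.const ℕ).obj m ⋙ preadditiveYoneda) 0
  hom_inv_id := by
    apply colimit.hom_ext
    intro j
    unfold colimY
    erw [colimit.ι_desc_assoc]
    have h0 : colimit.ι ((Functor.const ℕ).obj m ⋙ preadditiveYoneda) 0 =
        colimit.ι ((Functor.const ℕ).obj m ⋙ preadditiveYoneda) j := by
      rw [← colimit.w ((Functor.const ℕ).obj m ⋙ preadditiveYoneda) (homOfLE (Nat.zero_le j))]
      simp
    dsimp [constCocone]
    simp only [Category.id_comp, Category.comp_id]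
    exact h0
  inv_hom_id := by
    unfold colimY
    erw [colimit.ι_desc]
    rfl

/-- Representables on `M i` lie in `L i`. -/
lemma rep_inLsub (μ : GoodMetric S) (i : ℕ) {m : S} (hm : m ∈ μ.M i) :
    InLsub μ (μ.M i) (preadditiveYoneda.obj m) :=
  ⟨(Functor.const ℕ).obj m, const_isCauchy μ m, fun _ => hm, ⟨colimYConstIso m⟩⟩

end Aux

/-- Lemma 3.2.5: in `Mod-S` we have `Y(M_i)^⊥ = L_i^⊥`, and on
representables `^⊥Y(M_i) ∩ Y(S) = ^⊥L_i ∩ Y(S)`. -/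
theorem statement5 (μ : GoodMetric S) (i : ℕ) :
    (∀ X : Sᵒᵖ ⥤ AddCommGrpCat.{v},
      (∀ m ∈ μ.M i, ∀ φ : preadditiveYoneda.obj m ⟶ X, φ = 0) ↔
      (∀ F : Sᵒᵖ ⥤ AddCommGrpCat.{v}, InLsub μ (μ.M i) F → ∀ φ : F ⟶ X, φ = 0)) ∧
    (∀ s : S,
      (∀ m ∈ μ.M i, ∀ φ : preadditiveYoneda.obj s ⟶ preadditiveYoneda.obj m, φ = 0) ↔
      (∀ F : Sᵒᵖ ⥤ AddCommGrpCat.{v}, InLsub μ (μ.M i) F →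
        ∀ φ : preadditiveYoneda.obj s ⟶ F, φ = 0)) := by
  constructor
  · intro X
    constructor
    · rintro h F ⟨a, hca, hmem, ⟨e⟩⟩ φ
      have hz : e.hom ≫ φ = 0 := by
        apply colimit.hom_ext
        intro j
        erw [comp_zero]
        exact h (a.obj j) (hmem j) _
      calc φ = e.inv ≫ (e.hom ≫ φ) := by simp
        _ = 0 := by rw [hz, comp_zero]
    · intro h m hm φ
      exact h _ (rep_inLsub μ i hm) φ
  · intro s
    constructor
    · rintro h F ⟨a, hca, hmem, ⟨e⟩⟩ φ
      obtain ⟨j, g, hg⟩ := exists_factor a s (φ ≫ e.inv)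
      have hzero : preadditiveYoneda.map g = 0 := h (a.obj j) (hmem j) _
      have : φ ≫ e.inv = 0 := by rw [hg, hzero, zero_comp]; rfl
      calc φ = (φ ≫ e.inv) ≫ e.hom := by simp
        _ = 0 := by rw [this, zero_comp]
    · intro h m hm φ
      exact h _ (rep_inLsub μ i hm) φ


end Paper
end

section
/- Let S be a triangulated category with a good metric {M_i}. If A → B → C → ΣA is a distinguished triangle in 𝔖(S) and F is any object of L(S), then applying Hom(F, −) yields a long exact sequence of abelian groups. -/
open CategoryTheory CategoryTheory.Limits CategoryTheory.Pretriangulated ZeroObject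

universe v u

namespace Paper

variable (S : Type u) [Category.{v} S] [HasZeroObject S] [HasShift S ℤ]
  [Preadditive S] [∀ n : ℤ, (shiftFunctor S n).Additive] [Pretriangulated S]

variable {S}

section Aux

open Opposite

instance inst_s6 : PreservesFilteredColimitsOfSize.{0, 0} (forget AddCommGrpCat.{v}) :=
  preservesFilteredColimitsOfSize_shrink _

lemma M_mono (μ : GoodMetric S) {k n : ℕ} (h : k ≤ n) : μ.M n ⊆ μ.M k := by
  induction h with
  | refl => exact subset_rfl
  | step _ ih => exact fun X hX => ih (μ.anti _ hX)

lemma yapp_nat {G : Sᵒᵖ ⥤ AddCommGrpCat.{v}} {x : S} (φ : preadditiveYoneda.obj x ⟶ G)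
    {w : Sᵒᵖ} (g : unop w ⟶ x) :
    φ.app w g = G.map g.op (φ.app (op x) (𝟙 x)) := by
  have e1 : φ.app w (((preadditiveYoneda.obj x).map g.op) (𝟙 x))
      = G.map g.op (φ.app (op x) (𝟙 x)) := ConcreteCategory.congr_hom (φ.naturality g.op) (𝟙 x)
  rw [show ((preadditiveYoneda.obj x).map g.op) (𝟙 x) = g from Category.comp_id g] at e1
  exact e1

lemma yhom_ext {G : Sᵒᵖ ⥤ AddCommGrpCat.{v}} {x : S} {φ ψ : preadditiveYoneda.obj x ⟶ G}
    (h : φ.app (op x) (𝟙 x) = ψ.app (op x) (𝟙 x)) : φ = ψ := by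
  ext w g
  rw [yapp_nat φ g, yapp_nat ψ g, h]

lemma ymap_zero {x w : S} : preadditiveYoneda.map (0 : x ⟶ w) = 0 := by
  ext z g
  simp

lemma comp_elt {x w : S} (p : x ⟶ w) {G : Sᵒᵖ ⥤ AddCommGrpCat.{v}}
    (θ : preadditiveYoneda.obj w ⟶ G) :
    (preadditiveYoneda.map p ≫ θ).app (op x) (𝟙 x) = θ.app (op x) p := by
  have h1 : (preadditiveYoneda.map p ≫ θ).app (op x) (𝟙 x)
      = θ.app (op x) ((preadditiveYoneda.map p).app (op x) (𝟙 x)) := rfl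
  rw [h1, show (preadditiveYoneda.map p).app (op x) (𝟙 x) = p from Category.id_comp p]

lemma exists_rep (a : ℕ ⥤ S) {x : S} (φ : preadditiveYoneda.obj x ⟶ colimY a) :
    ∃ (j : ℕ) (p : x ⟶ a.obj j),
      φ = preadditiveYoneda.map p ≫ colimit.ι (a ⋙ preadditiveYoneda) j := by
  have hD : IsColimit (((evaluation Sᵒᵖ AddCommGrpCat.{v}).obj (op x)).mapCocone
      (colimit.cocone (a ⋙ preadditiveYoneda))) :=
    isColimitOfPreserves ((evaluation Sᵒᵖ AddCommGrpCat.{v}).obj (op x)) (colimit.isColimit _)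
  obtain ⟨j, y, hy⟩ := Concrete.isColimit_exists_rep _ hD (φ.app (op x) (𝟙 x))
  refine ⟨j, y, (yhom_ext ?_).symm⟩
  erw [comp_elt]
  exact hy

lemma eventually_zero (a : ℕ ⥤ S) {x : S} {j : ℕ} (p : x ⟶ a.obj j)
    (h : preadditiveYoneda.map p ≫ colimit.ι (a ⋙ preadditiveYoneda) j = 0) :
    ∃ (k : ℕ) (hk : j ≤ k), p ≫ a.map (homOfLE hk) = 0 := by
  have hD : IsColimit (((evaluation Sᵒᵖ AddCommGrpCat.{v}).obj (op x)).mapCocone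
      (colimit.cocone (a ⋙ preadditiveYoneda))) :=
    isColimitOfPreserves ((evaluation Sᵒᵖ AddCommGrpCat.{v}).obj (op x)) (colimit.isColimit _)
  have h0 : (colimit.ι (a ⋙ preadditiveYoneda) j).app (op x) p
      = (colimit.ι (a ⋙ preadditiveYoneda) j).app (op x) 0 := by
    have e : (preadditiveYoneda.map p ≫ colimit.ι (a ⋙ preadditiveYoneda) j).app (op x) (𝟙 x)
        = (0 : preadditiveYoneda.obj x ⟶ colimY a).app (op x) (𝟙 x) := by rw [h]; rfl
    rw [comp_elt] at e
    rw [map_zero]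
    exact e
  obtain ⟨k, f, g, hfg⟩ := Concrete.isColimit_exists_of_rep_eq _ hD
    (i := j) (j := j) p 0 h0
  refine ⟨k, leOfHom f, ?_⟩
  have hf : f = homOfLE (leOfHom f) := Subsingleton.elim _ _
  rw [← hf]
  have hgz : (((a ⋙ preadditiveYoneda) ⋙ (evaluation Sᵒᵖ AddCommGrpCat.{v}).obj (op x)).map g)
      (0 : x ⟶ a.obj j) = 0 := map_zero _
  erw [hgz] at hfg
  have e2 : p ≫ a.map f
      = (((a ⋙ preadditiveYoneda) ⋙ (evaluation Sᵒᵖ AddCommGrpCat.{v}).obj (op x)).map f) p := by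
        simp [preadditiveYoneda, preadditiveYonedaObj]
        rfl
  exact e2.trans hfg

lemma factor_through (a : ℕ ⥤ S) (T : Triangle S) (hT : T ∈ distTriang S)
    (φ : preadditiveYoneda.obj T.obj₂ ⟶ colimY a)
    (hφ : preadditiveYoneda.map T.mor₁ ≫ φ = 0) :
    ∃ χ : preadditiveYoneda.obj T.obj₃ ⟶ colimY a,
      φ = preadditiveYoneda.map T.mor₂ ≫ χ := by
  obtain ⟨j, p, rfl⟩ := exists_rep a φ
  have h1 : preadditiveYoneda.map (T.mor₁ ≫ p) ≫ colimit.ι (a ⋙ preadditiveYoneda) j = 0 := by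
    rw [Functor.map_comp, Category.assoc]; exact hφ
  obtain ⟨k, hk, h2⟩ := eventually_zero a _ h1
  obtain ⟨q, hq⟩ := Triangle.yoneda_exact₂ T hT (p ≫ a.map (homOfLE hk))
    (by rw [← Category.assoc]; exact h2)
  refine ⟨preadditiveYoneda.map q ≫ colimit.ι (a ⋙ preadditiveYoneda) k, ?_⟩
  erw [← Category.assoc, ← Functor.map_comp, ← hq, Functor.map_comp, Category.assoc]
  congr 1
  exact (colimit.w (a ⋙ preadditiveYoneda) (homOfLE hk)).symm

lemma restr_bijective (μ : GoodMetric S) {n : ℕ} {a : ℕ ⥤ S}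
    (hk : ∀ m ∈ μ.M n, ∀ φ : preadditiveYoneda.obj m ⟶ colimY a, φ = 0)
    {x y : S} {m : x ⟶ y} (hc : coneIn S (μ.M (n + 1)) m) :
    Function.Bijective (fun φ : (preadditiveYoneda.obj y ⟶ colimY a) =>
      preadditiveYoneda.map m ≫ φ) := by
  obtain ⟨z, g, h, hTz⟩ := distinguished_cocone_triangle m
  have hz : z ∈ μ.M (n + 1) := hc z g h hTz
  constructor
  · intro φ₁ φ₂ e
    dsimp only at e
    have h0 : preadditiveYoneda.map m ≫ (φ₁ - φ₂) = 0 := by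
      rw [Preadditive.comp_sub, e, sub_self]
    obtain ⟨χ, hχ⟩ := factor_through a _ hTz (φ₁ - φ₂) h0
    erw [hk z (μ.anti n hz) χ, comp_zero] at hχ
    exact sub_eq_zero.mp hχ
  · intro ψ
    have hT' := inv_rot_of_distTriang _ hTz
    have h0 : preadditiveYoneda.map ((Triangle.mk m g h).invRotate.mor₁) ≫ ψ = 0 :=
      hk _ (μ.shiftNeg_mem n hz) _
    obtain ⟨χ, hχ⟩ := factor_through a _ hT' ψ h0
    exact ⟨χ, hχ.symm⟩

lemma point_inj (μ : GoodMetric S) {n : ℕ} {a d : ℕ ⥤ S}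
    (hk : ∀ m ∈ μ.M n, ∀ φ : preadditiveYoneda.obj m ⟶ colimY a, φ = 0)
    {N : ℕ} (hN : ∀ i j : ℕ, N ≤ i → ∀ h : i ≤ j, coneIn S (μ.M (n + 1)) (d.map (homOfLE h)))
    {χ₁ χ₂ : colimY d ⟶ colimY a}
    (h : colimit.ι (d ⋙ preadditiveYoneda) N ≫ χ₁
        = colimit.ι (d ⋙ preadditiveYoneda) N ≫ χ₂) : χ₁ = χ₂ := by
  apply colimit.hom_ext
  intro i
  rcases le_total i N with hiN | hNi
  · erw [← colimit.w (d ⋙ preadditiveYoneda) (homOfLE hiN), Category.assoc, Category.assoc, h]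
  · apply (restr_bijective μ hk (hN N i le_rfl hNi)).injective
    dsimp only
    have hw : preadditiveYoneda.map (d.map (homOfLE hNi)) ≫ colimit.ι (d ⋙ preadditiveYoneda) i
        = colimit.ι (d ⋙ preadditiveYoneda) N := colimit.w (d ⋙ preadditiveYoneda) _
    erw [← Category.assoc, hw, ← Category.assoc, hw, h]

lemma point_surj (μ : GoodMetric S) {n : ℕ} {a d : ℕ ⥤ S}
    (hk : ∀ m ∈ μ.M n, ∀ φ : preadditiveYoneda.obj m ⟶ colimY a, φ = 0)
    {N : ℕ} (hN : ∀ i j : ℕ, N ≤ i → ∀ h : i ≤ j, coneIn S (μ.M (n + 1)) (d.map (homOfLE h)))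
    (q : preadditiveYoneda.obj (d.obj N) ⟶ colimY a) :
    ∃ χ : colimY d ⟶ colimY a, colimit.ι (d ⋙ preadditiveYoneda) N ≫ χ = q := by
  have bij : ∀ (i : ℕ) (h : N ≤ i),
      Function.Bijective (fun φ : (preadditiveYoneda.obj (d.obj i) ⟶ colimY a) =>
        preadditiveYoneda.map (d.map (homOfLE h)) ≫ φ) :=
    fun i h => restr_bijective μ hk (hN N i le_rfl h)
  choose lam hlam using fun (i : ℕ) (h : N ≤ i) => (bij i h).surjective q
  let L : ∀ i : ℕ, preadditiveYoneda.obj (d.obj i) ⟶ colimY a := fun i =>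
    if h : N ≤ i then lam i h
    else preadditiveYoneda.map (d.map (homOfLE (le_of_not_ge h))) ≫ q
  have hL : ∀ (i : ℕ) (h : N ≤ i),
      preadditiveYoneda.map (d.map (homOfLE h)) ≫ L i = q := by
    intro i h
    simp only [L, dif_pos h]
    exact hlam i h
  have comp_eq : ∀ {i j k : ℕ} (h1 : i ≤ j) (h2 : j ≤ k),
      preadditiveYoneda.map (d.map (homOfLE h1)) ≫ preadditiveYoneda.map (d.map (homOfLE h2))
        = preadditiveYoneda.map (d.map (homOfLE (h1.trans h2))) := by
    intro i j k h1 h2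
    rw [← Functor.map_comp, ← Functor.map_comp, homOfLE_comp]
  have nat : ∀ {i j : ℕ} (f : i ⟶ j), preadditiveYoneda.map (d.map f) ≫ L j = L i := by
    intro i j f
    have hij : i ≤ j := leOfHom f
    have hf : f = homOfLE hij := Subsingleton.elim _ _
    rw [hf]
    by_cases hNi : N ≤ i
    · apply (bij i hNi).injective
      dsimp only
      rw [← Category.assoc, comp_eq, hL j (hNi.trans hij), hL i hNi]
    · have hiN : i ≤ N := le_of_not_ge hNi
      by_cases hNj : N ≤ j
      · have hLi : L i = preadditiveYoneda.map (d.map (homOfLE hiN)) ≫ q := by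
          simp only [L, dif_neg hNi]
        rw [hLi, ← hL j hNj, ← Category.assoc, comp_eq]
      · have hjN : j ≤ N := le_of_not_ge hNj
        simp only [L, dif_neg hNi, dif_neg hNj]
        rw [← Category.assoc, comp_eq]
  refine ⟨colimit.desc (d ⋙ preadditiveYoneda)
    { pt := colimY a
      ι := { app := L, naturality := fun i j f => by
              simpa using nat f } }, ?_⟩
  rw [colimit.ι_desc]
  have := hL N le_rfl
  simpa using this

end Aux

/-- Lemma 3.305: if `A ⟶ B ⟶ C` underlies a distinguished triangle of
`𝔖(S)` (i.e. a strong triangle with all three objects in `𝔖(S)`) and `F ∈ L(S)`, then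
`Hom(F, −)` yields a long exact sequence; equivalently (by rotation) the sequence
`Hom(F,A) ⟶ Hom(F,B) ⟶ Hom(F,C)` is exact. -/
theorem statement6 (μ : GoodMetric S) {A B C : Sᵒᵖ ⥤ AddCommGrpCat.{v}}
    (u : A ⟶ B) (v : B ⟶ C) (hT : StrongTriangleOn μ A B C u v)
    (hA : InFrak μ A) (hB : InFrak μ B) (hC : InFrak μ C)
    (F : Sᵒᵖ ⥤ AddCommGrpCat.{v}) (hF : InL μ F) :
    (∀ φ : F ⟶ A, φ ≫ u ≫ v = 0) ∧
    (∀ ψ : F ⟶ B, ψ ≫ v = 0 → ∃ φ : F ⟶ A, φ ≫ u = ψ) := by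
  obtain ⟨T, eA, eB, eC, c1, c2⟩ := hT
  obtain ⟨nA, hAk⟩ := hA.2
  obtain ⟨nB, hBk⟩ := hB.2
  set n := max nA nB with hn
  have kA : ∀ m ∈ μ.M n, ∀ φ : preadditiveYoneda.obj m ⟶ colimY T.a, φ = 0 := by
    intro m hm φ
    have h0 : φ ≫ eA.hom = 0 := hAk m (M_mono μ (le_max_left _ _) hm) _
    calc φ = (φ ≫ eA.hom) ≫ eA.inv := by
            rw [Category.assoc, eA.hom_inv_id, Category.comp_id]
      _ = 0 := by rw [h0, zero_comp]
  have kB : ∀ m ∈ μ.M n, ∀ φ : preadditiveYoneda.obj m ⟶ colimY T.b, φ = 0 := by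
    intro m hm φ
    have h0 : φ ≫ eB.hom = 0 := hBk m (M_mono μ (le_max_right _ _) hm) _
    calc φ = (φ ≫ eB.hom) ≫ eB.inv := by
            rw [Category.assoc, eB.hom_inv_id, Category.comp_id]
      _ = 0 := by rw [h0, zero_comp]
  have hfg : colimYmap T.f ≫ colimYmap T.comp.g = 0 := by
    apply colimit.hom_ext
    intro i
    erw [comp_zero]
    simp only [colimYmap, colimY, ι_colimMap_assoc, ι_colimMap, Functor.whiskerRight_app]
    rw [← Category.assoc, ← Functor.map_comp]
    have hz : T.f.app i ≫ T.comp.g.app i = 0 :=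
      comp_distTriang_mor_zero₁₂ _ (T.comp.dist i)
    rw [hz, ymap_zero, zero_comp]
    rfl
  have huv : u ≫ v = 0 := by
    have h1 : eA.hom ≫ u ≫ v = 0 := by
      rw [← Category.assoc, ← c1, Category.assoc, ← c2, ← Category.assoc, hfg, zero_comp]
    have h2 := eA.inv_hom_id_assoc (u ≫ v)
    rw [← h2, h1, comp_zero]
  refine ⟨fun φ => by rw [huv, comp_zero], ?_⟩
  obtain ⟨d, hd, ⟨eF⟩⟩ := hF
  obtain ⟨N, hNc⟩ := hd (n + 1)
  intro ψ hψ
  set ψ' : colimY d ⟶ colimY T.b := eF.hom ≫ ψ ≫ eB.inv with hψ'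
  have hψg : ψ' ≫ colimYmap T.comp.g = 0 := by
    have hg : colimYmap T.comp.g = eB.hom ≫ v ≫ eC.inv := by
      rw [← Category.assoc, ← c2, Category.assoc, eC.hom_inv_id, Category.comp_id]
    rw [hψ', hg]
    simp only [Category.assoc, Iso.inv_hom_id_assoc]
    simp only [reassoc_of% hψ, zero_comp, comp_zero]
  have hr : (colimit.ι (d ⋙ preadditiveYoneda) N ≫ ψ') ≫ colimYmap T.comp.g = 0 := by
    erw [Category.assoc, hψg, comp_zero]
  obtain ⟨j, p, hp⟩ := exists_rep T.b (colimit.ι (d ⋙ preadditiveYoneda) N ≫ ψ')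
  have h1 : preadditiveYoneda.map (p ≫ T.comp.g.app j)
      ≫ colimit.ι (T.comp.c ⋙ preadditiveYoneda) j = 0 := by
    have e1 : colimit.ι (T.b ⋙ preadditiveYoneda) j ≫ colimYmap T.comp.g
        = preadditiveYoneda.map (T.comp.g.app j)
          ≫ colimit.ι (T.comp.c ⋙ preadditiveYoneda) j := by
      simp only [colimYmap, colimY, ι_colimMap, Functor.whiskerRight_app]
    erw [Functor.map_comp, Category.assoc, ← e1, ← Category.assoc, ← hp, hr]
    rfl
  obtain ⟨k, hk, h2⟩ := eventually_zero T.comp.c _ h1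
  have h3 : (p ≫ T.b.map (homOfLE hk)) ≫ T.comp.g.app k = 0 := by
    rw [Category.assoc, T.comp.g.naturality (homOfLE hk), ← Category.assoc]
    exact h2
  obtain ⟨q, hq⟩ := Triangle.coyoneda_exact₂ _ (T.comp.dist k) (p ≫ T.b.map (homOfLE hk)) h3
  have hqq : q ≫ T.f.app k = p ≫ T.b.map (homOfLE hk) := hq.symm
  have hq' : (preadditiveYoneda.map q ≫ colimit.ι (T.a ⋙ preadditiveYoneda) k) ≫ colimYmap T.f
      = colimit.ι (d ⋙ preadditiveYoneda) N ≫ ψ' := by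
    have e1 : colimit.ι (T.a ⋙ preadditiveYoneda) k ≫ colimYmap T.f
        = preadditiveYoneda.map (T.f.app k) ≫ colimit.ι (T.b ⋙ preadditiveYoneda) k := by
      simp only [colimYmap, colimY, ι_colimMap, Functor.whiskerRight_app]
    have w1 : preadditiveYoneda.map (T.b.map (homOfLE hk))
        ≫ colimit.ι (T.b ⋙ preadditiveYoneda) k
        = colimit.ι (T.b ⋙ preadditiveYoneda) j := colimit.w (T.b ⋙ preadditiveYoneda) _
    erw [Category.assoc, e1, ← Category.assoc, ← Functor.map_comp, hqq,
        Functor.map_comp, Category.assoc, w1]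
    exact hp.symm
  obtain ⟨φ₀, hφ₀⟩ := point_surj μ kA hNc
    (preadditiveYoneda.map q ≫ colimit.ι (T.a ⋙ preadditiveYoneda) k)
  have hmain : φ₀ ≫ colimYmap T.f = ψ' :=
    point_inj μ kB hNc (by erw [← Category.assoc, hφ₀, hq'])
  refine ⟨eF.inv ≫ φ₀ ≫ eA.hom, ?_⟩
  rw [Category.assoc, Category.assoc, ← c1, ← Category.assoc φ₀, hmain, hψ']
  simp

end Paper
end

section
/- Let S be a triangulated category with a good metric {M_i}, and let F ∈ 𝔖(S). Then the functor Hom(−, F) takes any strong triangle A → B → C → ΣA in L(S) to a long exact sequence. -/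
open CategoryTheory CategoryTheory.Limits CategoryTheory.Pretriangulated ZeroObject

universe v u

namespace Paper

variable (S : Type u) [Category.{v} S] [HasZeroObject S] [HasShift S ℤ]
  [Preadditive S] [∀ n : ℤ, (shiftFunctor S n).Additive] [Pretriangulated S]

variable {S}

section Aux

open Opposite

lemma preY_hom_ext {x : S} {G : Sᵒᵖ ⥤ AddCommGrpCat.{v}} {β β' : preadditiveYoneda.obj x ⟶ G}
    (h : β.app (op x) (𝟙 x) = β'.app (op x) (𝟙 x)) : β = β' := by
  have key : ∀ (δ : preadditiveYoneda.obj x ⟶ G) (z : S) (α : z ⟶ x),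
      δ.app (op z) α = G.map α.op (δ.app (op x) (𝟙 x)) := by
    intro δ z α
    have := congr_arg (fun (m : (preadditiveYoneda.obj x).obj (op x) ⟶ G.obj (op z)) => m (𝟙 x))
      (δ.naturality α.op)
    have harg : ((preadditiveYoneda.obj x).map α.op) (𝟙 x) = α := Category.comp_id α
    conv_lhs => rw [← harg]
    exact this
  ext z α
  obtain ⟨z⟩ := z
  refine (key β z α).trans ?_
  rw [h]
  exact (key β' z α).symm

lemma preY_exists_rep (d : ℕ ⥤ S) {x : S} (β : preadditiveYoneda.obj x ⟶ colimY d) :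
    ∃ (k : ℕ) (α : x ⟶ d.obj k),
      β = preadditiveYoneda.map α ≫ colimit.ι (d ⋙ preadditiveYoneda) k := by
  haveI : PreservesFilteredColimitsOfSize.{0, 0} (forget AddCommGrpCat.{v}) :=
    preservesSmallestFilteredColimits_of_preservesFilteredColimits _
  obtain ⟨k, α, hα⟩ := Concrete.colimit_exists_rep
    ((d ⋙ preadditiveYoneda) ⋙ (evaluation Sᵒᵖ AddCommGrpCat.{v}).obj (op x))
    ((colimitObjIsoColimitCompEvaluation (d ⋙ preadditiveYoneda) (op x)).hom
      (β.app (op x) (𝟙 x)))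
  refine ⟨k, α, preY_hom_ext ?_⟩
  have hcomp : ((colimitObjIsoColimitCompEvaluation (d ⋙ preadditiveYoneda) (op x)).hom ≫
      (colimitObjIsoColimitCompEvaluation (d ⋙ preadditiveYoneda) (op x)).inv)
        ((β.app (op x)) (𝟙 x))
      = (𝟙 ((colimit (d ⋙ preadditiveYoneda)).obj (op x))) ((β.app (op x)) (𝟙 x)) :=
    congr_arg (fun (m : (colimit (d ⋙ preadditiveYoneda)).obj (op x) ⟶
        (colimit (d ⋙ preadditiveYoneda)).obj (op x)) => m (β.app (op x) (𝟙 x)))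
      (colimitObjIsoColimitCompEvaluation (d ⋙ preadditiveYoneda) (op x)).hom_inv_id
  have h2 := congr_arg
    (fun (m : (((d ⋙ preadditiveYoneda) ⋙ (evaluation Sᵒᵖ AddCommGrpCat.{v}).obj (op x)).obj k
        ⟶ (colimit (d ⋙ preadditiveYoneda)).obj (op x))) => m α)
    (colimitObjIsoColimitCompEvaluation_ι_inv (d ⋙ preadditiveYoneda) k (op x))
  have t2 : (colimitObjIsoColimitCompEvaluation (d ⋙ preadditiveYoneda) (op x)).inv
        ((colimit.ι ((d ⋙ preadditiveYoneda) ⋙ (evaluation Sᵒᵖ AddCommGrpCat.{v}).obj (op x)) k) α)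
      = (colimitObjIsoColimitCompEvaluation (d ⋙ preadditiveYoneda) (op x)).inv
        ((colimitObjIsoColimitCompEvaluation (d ⋙ preadditiveYoneda) (op x)).hom
          ((β.app (op x)) (𝟙 x))) :=
    congr_arg
      (fun t => (colimitObjIsoColimitCompEvaluation (d ⋙ preadditiveYoneda) (op x)).inv t) hα
  have h4 : ((colimit.ι (d ⋙ preadditiveYoneda) k).app (op x)) α = (β.app (op x)) (𝟙 x) :=
    (h2.symm.trans t2).trans hcomp
  have h5 : ((preadditiveYoneda.map α ≫ colimit.ι (d ⋙ preadditiveYoneda) k).app (op x)) (𝟙 x)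
      = ((colimit.ι (d ⋙ preadditiveYoneda) k).app (op x)) α := by
    have h6 : ((preadditiveYoneda.map α).app (op x)) (𝟙 x) = α := Category.id_comp α
    exact congr_arg (fun t => ((colimit.ι (d ⋙ preadditiveYoneda) k).app (op x)) t) h6
  exact h4.symm.trans h5.symm

lemma preY_rep_eq_zero (d : ℕ ⥤ S) {x : S} {k : ℕ} (α : x ⟶ d.obj k)
    (h : preadditiveYoneda.map α ≫ colimit.ι (d ⋙ preadditiveYoneda) k = 0) :
    ∃ (k' : ℕ) (hk : k ≤ k'), α ≫ d.map (homOfLE hk) = 0 := by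
  haveI : PreservesFilteredColimitsOfSize.{0, 0} (forget AddCommGrpCat.{v}) :=
    preservesSmallestFilteredColimits_of_preservesFilteredColimits _
  have h1 : ((colimit.ι (d ⋙ preadditiveYoneda) k).app (op x)) α
      = ((colimit.ι (d ⋙ preadditiveYoneda) k).app (op x)) 0 := by
    have e1 : ((preadditiveYoneda.map α ≫ colimit.ι (d ⋙ preadditiveYoneda) k).app (op x)) (𝟙 x)
        = ((0 : preadditiveYoneda.obj x ⟶ colimit (d ⋙ preadditiveYoneda)).app (op x)) (𝟙 x) :=
      congr_arg (fun (m : preadditiveYoneda.obj x ⟶ colimit (d ⋙ preadditiveYoneda)) =>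
        m.app (op x) (𝟙 x)) h
    have e2 : ((preadditiveYoneda.map α ≫ colimit.ι (d ⋙ preadditiveYoneda) k).app (op x)) (𝟙 x)
        = ((colimit.ι (d ⋙ preadditiveYoneda) k).app (op x)) α :=
      congr_arg (fun t => ((colimit.ι (d ⋙ preadditiveYoneda) k).app (op x)) t)
        (Category.id_comp α)
    rw [← e2, e1]
    simp
    rfl
  have h2 : (colimit.ι ((d ⋙ preadditiveYoneda) ⋙ (evaluation Sᵒᵖ AddCommGrpCat.{v}).obj (op x)) k) α
      = (colimit.ι ((d ⋙ preadditiveYoneda) ⋙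
          (evaluation Sᵒᵖ AddCommGrpCat.{v}).obj (op x)) k) 0 := by
    have e3 := congr_arg
      (fun (m : ((d ⋙ preadditiveYoneda).obj k).obj (op x)
          ⟶ colimit ((d ⋙ preadditiveYoneda) ⋙ (evaluation Sᵒᵖ AddCommGrpCat.{v}).obj (op x))) =>
        m α)
      (colimitObjIsoColimitCompEvaluation_ι_app_hom (d ⋙ preadditiveYoneda) k (op x))
    have e4 := congr_arg
      (fun (m : ((d ⋙ preadditiveYoneda).obj k).obj (op x)
          ⟶ colimit ((d ⋙ preadditiveYoneda) ⋙ (evaluation Sᵒᵖ AddCommGrpCat.{v}).obj (op x))) =>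
        m 0)
      (colimitObjIsoColimitCompEvaluation_ι_app_hom (d ⋙ preadditiveYoneda) k (op x))
    have e5 : ((colimitObjIsoColimitCompEvaluation (d ⋙ preadditiveYoneda) (op x)).hom)
          (((colimit.ι (d ⋙ preadditiveYoneda) k).app (op x)) α)
        = ((colimitObjIsoColimitCompEvaluation (d ⋙ preadditiveYoneda) (op x)).hom)
          (((colimit.ι (d ⋙ preadditiveYoneda) k).app (op x)) 0) :=
      congr_arg (fun t =>
        ((colimitObjIsoColimitCompEvaluation (d ⋙ preadditiveYoneda) (op x)).hom) t) h1
    exact (e3.symm.trans e5).trans e4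
  obtain ⟨k', f, g, hfg⟩ := Concrete.colimit_exists_of_rep_eq
    ((d ⋙ preadditiveYoneda) ⋙ (evaluation Sᵒᵖ AddCommGrpCat.{v}).obj (op x)) _ _ h2
  refine ⟨k', leOfHom f, ?_⟩
  have hf : f = homOfLE (leOfHom f) := rfl
  have hg : (((d ⋙ preadditiveYoneda) ⋙ (evaluation Sᵒᵖ AddCommGrpCat.{v}).obj (op x)).map g) 0 = 0 :=
    map_zero _
  rw [hf] at hfg
  have heq : α ≫ d.map (homOfLE (leOfHom f))
      = (((d ⋙ preadditiveYoneda) ⋙ (evaluation Sᵒᵖ AddCommGrpCat.{v}).obj (op x)).map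
          (homOfLE (leOfHom f))) α := rfl
  rw [heq, hfg, hg]
  rfl

lemma preY_map_zero {X Y : S} : preadditiveYoneda.map (0 : X ⟶ Y) = 0 := by
  ext
  simp

lemma homological_colimY (d : ℕ ⥤ S) (T : Triangle S) (hT : T ∈ distTriang S)
    (β : preadditiveYoneda.obj T.obj₂ ⟶ colimY d)
    (hβ : preadditiveYoneda.map T.mor₁ ≫ β = 0) :
    ∃ γ : preadditiveYoneda.obj T.obj₃ ⟶ colimY d,
      preadditiveYoneda.map T.mor₂ ≫ γ = β := by
  obtain ⟨k, α, rfl⟩ := preY_exists_rep d β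
  have h1 : preadditiveYoneda.map (T.mor₁ ≫ α) ≫ colimit.ι (d ⋙ preadditiveYoneda) k = 0 := by
    rw [preadditiveYoneda.map_comp, Category.assoc]; exact hβ
  obtain ⟨k', hk, h0⟩ := preY_rep_eq_zero d (T.mor₁ ≫ α) h1
  have h0' : T.mor₁ ≫ (α ≫ d.map (homOfLE hk)) = 0 := by rw [← Category.assoc]; exact h0
  obtain ⟨g, hg⟩ := Pretriangulated.Triangle.yoneda_exact₂ T hT _ h0'
  refine ⟨preadditiveYoneda.map g ≫ colimit.ι (d ⋙ preadditiveYoneda) k', ?_⟩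
  calc preadditiveYoneda.map T.mor₂ ≫ preadditiveYoneda.map g
        ≫ colimit.ι (d ⋙ preadditiveYoneda) k'
      = preadditiveYoneda.map (T.mor₂ ≫ g) ≫ colimit.ι (d ⋙ preadditiveYoneda) k' := by
        rw [preadditiveYoneda.map_comp, Category.assoc]
    _ = preadditiveYoneda.map (α ≫ d.map (homOfLE hk))
          ≫ colimit.ι (d ⋙ preadditiveYoneda) k' := by rw [← hg]
    _ = preadditiveYoneda.map α ≫ ((d ⋙ preadditiveYoneda).map (homOfLE hk)
          ≫ colimit.ι (d ⋙ preadditiveYoneda) k') := by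
        rw [preadditiveYoneda.map_comp, Category.assoc]; rfl
    _ = preadditiveYoneda.map α ≫ colimit.ι (d ⋙ preadditiveYoneda) k := by
        rw [colimit.w]

lemma lift_exists (μ : GoodMetric S) (n : ℕ) {F : Sᵒᵖ ⥤ AddCommGrpCat.{v}}
    (hH : ∀ (T : Triangle S), (T ∈ distTriang S) →
      ∀ β : preadditiveYoneda.obj T.obj₂ ⟶ F, preadditiveYoneda.map T.mor₁ ≫ β = 0 →
        ∃ γ : preadditiveYoneda.obj T.obj₃ ⟶ F, preadditiveYoneda.map T.mor₂ ≫ γ = β)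
    (hperp : ∀ m ∈ μ.M n, ∀ φ : preadditiveYoneda.obj m ⟶ F, φ = 0)
    {X Y : S} (f : X ⟶ Y) (hf : coneIn S (μ.M (n + 1)) f)
    (β : preadditiveYoneda.obj X ⟶ F) :
    ∃ β' : preadditiveYoneda.obj Y ⟶ F, preadditiveYoneda.map f ≫ β' = β := by
  obtain ⟨Z, g, h, hT⟩ := Pretriangulated.distinguished_cocone_triangle f
  have hZ : Z ∈ μ.M (n + 1) := hf Z g h hT
  have hT' := inv_rot_of_distTriang _ hT
  have hzero : preadditiveYoneda.map ((Triangle.mk f g h).invRotate.mor₁) ≫ β = 0 :=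
    hperp _ (μ.shiftNeg_mem n hZ) _
  obtain ⟨γ, hγ⟩ := hH _ hT' β hzero
  exact ⟨γ, hγ⟩

lemma precomp_cancel (μ : GoodMetric S) (n : ℕ) {F : Sᵒᵖ ⥤ AddCommGrpCat.{v}}
    (hH : ∀ (T : Triangle S), (T ∈ distTriang S) →
      ∀ β : preadditiveYoneda.obj T.obj₂ ⟶ F, preadditiveYoneda.map T.mor₁ ≫ β = 0 →
        ∃ γ : preadditiveYoneda.obj T.obj₃ ⟶ F, preadditiveYoneda.map T.mor₂ ≫ γ = β)
    (hperp : ∀ m ∈ μ.M n, ∀ φ : preadditiveYoneda.obj m ⟶ F, φ = 0)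
    {X Y : S} (f : X ⟶ Y) (hf : coneIn S (μ.M (n + 1)) f)
    {β β' : preadditiveYoneda.obj Y ⟶ F}
    (h : preadditiveYoneda.map f ≫ β = preadditiveYoneda.map f ≫ β') : β = β' := by
  obtain ⟨Z, g, hh, hT⟩ := Pretriangulated.distinguished_cocone_triangle f
  have hZ : Z ∈ μ.M n := μ.anti n (hf Z g hh hT)
  have h0 : preadditiveYoneda.map f ≫ (β - β') = 0 := by
    rw [Preadditive.comp_sub, h, sub_self]
  obtain ⟨γ, hγ⟩ := hH _ hT (β - β') h0
  have hγ0 : γ = 0 := hperp _ hZ γ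
  have hββ' : β - β' = 0 := by rw [← hγ, hγ0, comp_zero]; rfl
  exact sub_eq_zero.mp hββ'

end Aux

/-- Lemma 3.303: if `F ∈ 𝔖(S)` then `Hom(−, F)` takes any strong triangle
`A ⟶ B ⟶ C` in `L(S)` to a long exact sequence; equivalently (by rotation) the sequence
`Hom(C,F) ⟶ Hom(B,F) ⟶ Hom(A,F)` is exact. -/
theorem statement7 (μ : GoodMetric S) {A B C : Sᵒᵖ ⥤ AddCommGrpCat.{v}}
    (u : A ⟶ B) (v : B ⟶ C) (hT : StrongTriangleOn μ A B C u v)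
    (F : Sᵒᵖ ⥤ AddCommGrpCat.{v}) (hF : InFrak μ F) :
    (∀ φ : C ⟶ F, u ≫ v ≫ φ = 0) ∧
    (∀ ψ : B ⟶ F, u ≫ ψ = 0 → ∃ φ : C ⟶ F, v ≫ φ = ψ) := by
  obtain ⟨T, eA, eB, eC, hu, hv⟩ := hT
  -- the composition of the two colimit maps vanishes
  have hfg : colimYmap T.f ≫ colimYmap T.comp.g = 0 := by
    apply colimit.hom_ext
    intro i
    dsimp only [colimYmap, colimY]
    rw [ι_colimMap_assoc, Functor.whiskerRight_app, ι_colimMap, Functor.whiskerRight_app,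
      ← Category.assoc, ← preadditiveYoneda.map_comp]
    have hz : T.f.app i ≫ T.comp.g.app i = 0 := comp_distTriang_mor_zero₁₂ _ (T.comp.dist i)
    rw [hz, preY_map_zero, zero_comp]
    exact comp_zero.symm
  have hu' : u = eA.inv ≫ colimYmap T.f ≫ eB.hom := by
    rw [hu, Iso.inv_hom_id_assoc]
  have hv' : v = eB.inv ≫ colimYmap T.comp.g ≫ eC.hom := by
    rw [hv, Iso.inv_hom_id_assoc]
  constructor
  · intro φ
    rw [hu', hv']
    simp only [Category.assoc, Iso.hom_inv_id_assoc]
    rw [reassoc_of% hfg]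
    simp
  · intro ψ hψ
    obtain ⟨⟨d, hd, ⟨e⟩⟩, n, hperp⟩ := hF
    have hH : ∀ (T' : Triangle S), (T' ∈ distTriang S) →
        ∀ β : preadditiveYoneda.obj T'.obj₂ ⟶ F, preadditiveYoneda.map T'.mor₁ ≫ β = 0 →
          ∃ γ : preadditiveYoneda.obj T'.obj₃ ⟶ F,
            preadditiveYoneda.map T'.mor₂ ≫ γ = β := by
      intro T' hT' β hβ
      obtain ⟨γ, hγ⟩ := homological_colimY d T' hT' (β ≫ e.inv)
        (by rw [← Category.assoc, hβ, zero_comp])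
      refine ⟨γ ≫ e.hom, ?_⟩
      rw [← Category.assoc, hγ, Category.assoc, Iso.inv_hom_id, Category.comp_id]
    set ψ' : colimit (T.b ⋙ preadditiveYoneda) ⟶ F := eB.hom ≫ ψ with hψ'def
    have h0 : colimYmap T.f ≫ ψ' = 0 := by
      rw [hψ'def]
      exact (Category.assoc (colimYmap T.f) eB.hom ψ).symm.trans
        (by rw [hu, Category.assoc, hψ, comp_zero])
    have hcomp0 : ∀ i, preadditiveYoneda.map (T.f.app i)
        ≫ (colimit.ι (T.b ⋙ preadditiveYoneda) i ≫ ψ') = 0 := by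
      intro i
      calc preadditiveYoneda.map (T.f.app i) ≫ colimit.ι (T.b ⋙ preadditiveYoneda) i ≫ ψ'
          = ((Functor.whiskerRight T.f preadditiveYoneda).app i
              ≫ colimit.ι (T.b ⋙ preadditiveYoneda) i) ≫ ψ' := by
            rw [Functor.whiskerRight_app, Category.assoc]
        _ = (colimit.ι (T.a ⋙ preadditiveYoneda) i
              ≫ colimMap (Functor.whiskerRight T.f preadditiveYoneda)) ≫ ψ' := by
            rw [ι_colimMap]
        _ = colimit.ι (T.a ⋙ preadditiveYoneda) i ≫ (colimYmap T.f ≫ ψ') := by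
            rw [Category.assoc]; rfl
        _ = 0 := (congrArg (colimit.ι (T.a ⋙ preadditiveYoneda) i ≫ ·) h0).trans comp_zero
    obtain ⟨N₁, hN₁⟩ := T.hc (n + 1)
    obtain ⟨N₂, hN₂⟩ := T.hb (n + 1)
    set N := max N₁ N₂ with hNdef
    have hcN : ∀ i j (_ : N ≤ i) (hij : i ≤ j),
        coneIn S (μ.M (n + 1)) (T.comp.c.map (homOfLE hij)) :=
      fun i j hi hij => hN₁ i j (le_trans (le_max_left _ _) hi) hij
    have hbN : ∀ i j (_ : N ≤ i) (hij : i ≤ j),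
        coneIn S (μ.M (n + 1)) (T.b.map (homOfLE hij)) :=
      fun i j hi hij => hN₂ i j (le_trans (le_max_right _ _) hi) hij
    obtain ⟨t0, ht0⟩ := hH _ (T.comp.dist N)
      (colimit.ι (T.b ⋙ preadditiveYoneda) N ≫ ψ') (hcomp0 N)
    -- choose lifts of t0 along the transition maps
    have hs0 : ∀ i : ℕ, ∃ sᵢ : preadditiveYoneda.obj (T.comp.c.obj i) ⟶ F,
        ∀ hi : N ≤ i, preadditiveYoneda.map (T.comp.c.map (homOfLE hi)) ≫ sᵢ = t0 := by
      intro i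
      by_cases hi : N ≤ i
      · obtain ⟨sᵢ, hsᵢ⟩ := lift_exists μ n hH hperp (T.comp.c.map (homOfLE hi))
          (hcN N i le_rfl hi) t0
        exact ⟨sᵢ, fun _ => hsᵢ⟩
      · exact ⟨0, fun hi' => absurd hi' hi⟩
    choose s hs using hs0
    have key : ∀ i j (hi : N ≤ i) (hij : i ≤ j),
        preadditiveYoneda.map (T.comp.c.map (homOfLE hij)) ≫ s j = s i := by
      intro i j hi hij
      apply precomp_cancel μ n hH hperp (T.comp.c.map (homOfLE hi)) (hcN N i le_rfl hi)
      rw [← Category.assoc, ← preadditiveYoneda.map_comp, ← T.comp.c.map_comp, homOfLE_comp,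
        hs j (hi.trans hij), hs i hi]
    let t : ∀ i, preadditiveYoneda.obj (T.comp.c.obj i) ⟶ F :=
      fun i => preadditiveYoneda.map (T.comp.c.map (homOfLE (le_max_left i N))) ≫ s (max i N)
    have hcompat : ∀ i j (hij : i ≤ j),
        preadditiveYoneda.map (T.comp.c.map (homOfLE hij)) ≫ t j = t i := by
      intro i j hij
      have h1 : max i N ≤ max j N := max_le_max hij le_rfl
      show preadditiveYoneda.map (T.comp.c.map (homOfLE hij))
          ≫ preadditiveYoneda.map (T.comp.c.map (homOfLE (le_max_left j N))) ≫ s (max j N)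
        = preadditiveYoneda.map (T.comp.c.map (homOfLE (le_max_left i N))) ≫ s (max i N)
      rw [← Category.assoc, ← preadditiveYoneda.map_comp, ← T.comp.c.map_comp, homOfLE_comp]
      have h2 : (homOfLE (hij.trans (le_max_left j N)) : (i : ℕ) ⟶ max j N)
          = homOfLE (le_max_left i N) ≫ homOfLE h1 := rfl
      rw [h2, T.comp.c.map_comp, preadditiveYoneda.map_comp, Category.assoc,
        key (max i N) (max j N) (le_max_right i N) h1]
    let κ : Cocone (T.comp.c ⋙ preadditiveYoneda) :=
      { pt := F
        ι :=
          { app := t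
            naturality := by
              intro i j hle
              simp only [Functor.const_obj_map, Category.comp_id]
              exact hcompat i j (leOfHom hle) } }
    have hgm : ∀ i (hi : N ≤ i), preadditiveYoneda.map (T.comp.g.app i) ≫ s i
        = colimit.ι (T.b ⋙ preadditiveYoneda) i ≫ ψ' := by
      intro i hi
      apply precomp_cancel μ n hH hperp (T.b.map (homOfLE hi)) (hbN N i le_rfl hi)
      calc preadditiveYoneda.map (T.b.map (homOfLE hi))
            ≫ preadditiveYoneda.map (T.comp.g.app i) ≫ s i
          = preadditiveYoneda.map (T.b.map (homOfLE hi) ≫ T.comp.g.app i) ≫ s i := by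
            rw [preadditiveYoneda.map_comp, Category.assoc]
        _ = preadditiveYoneda.map (T.comp.g.app N ≫ T.comp.c.map (homOfLE hi)) ≫ s i := by
            rw [T.comp.g.naturality]
        _ = preadditiveYoneda.map (T.comp.g.app N)
              ≫ (preadditiveYoneda.map (T.comp.c.map (homOfLE hi)) ≫ s i) := by
            rw [preadditiveYoneda.map_comp, Category.assoc]
        _ = preadditiveYoneda.map (T.comp.g.app N) ≫ t0 := by rw [hs i hi]
        _ = colimit.ι (T.b ⋙ preadditiveYoneda) N ≫ ψ' := ht0
        _ = preadditiveYoneda.map (T.b.map (homOfLE hi))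
              ≫ colimit.ι (T.b ⋙ preadditiveYoneda) i ≫ ψ' := by
            rw [← colimit.w (T.b ⋙ preadditiveYoneda) (homOfLE hi), Category.assoc]; rfl
    have hfinal : ∀ i, preadditiveYoneda.map (T.comp.g.app i) ≫ t i
        = colimit.ι (T.b ⋙ preadditiveYoneda) i ≫ ψ' := by
      intro i
      calc preadditiveYoneda.map (T.comp.g.app i)
            ≫ preadditiveYoneda.map (T.comp.c.map (homOfLE (le_max_left i N))) ≫ s (max i N)
          = preadditiveYoneda.map
              (T.comp.g.app i ≫ T.comp.c.map (homOfLE (le_max_left i N))) ≫ s (max i N) := by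
            rw [preadditiveYoneda.map_comp, Category.assoc]
        _ = preadditiveYoneda.map
              (T.b.map (homOfLE (le_max_left i N)) ≫ T.comp.g.app (max i N)) ≫ s (max i N) := by
            rw [← T.comp.g.naturality]
        _ = preadditiveYoneda.map (T.b.map (homOfLE (le_max_left i N)))
              ≫ (preadditiveYoneda.map (T.comp.g.app (max i N)) ≫ s (max i N)) := by
            rw [preadditiveYoneda.map_comp, Category.assoc]
        _ = preadditiveYoneda.map (T.b.map (homOfLE (le_max_left i N)))
              ≫ (colimit.ι (T.b ⋙ preadditiveYoneda) (max i N) ≫ ψ') := by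
            rw [hgm (max i N) (le_max_right i N)]
        _ = colimit.ι (T.b ⋙ preadditiveYoneda) i ≫ ψ' := by
            rw [← colimit.w (T.b ⋙ preadditiveYoneda) (homOfLE (le_max_left i N)),
              Category.assoc]
            rfl
    have hvφ' : colimYmap T.comp.g ≫ colimit.desc (T.comp.c ⋙ preadditiveYoneda) κ = ψ' := by
      apply colimit.hom_ext
      intro i
      dsimp only [colimYmap, colimY]
      rw [ι_colimMap_assoc, colimit.ι_desc]
      exact hfinal i
    refine ⟨eC.inv ≫ colimit.desc (T.comp.c ⋙ preadditiveYoneda) κ, ?_⟩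
    rw [← cancel_epi eB.hom, ← Category.assoc, ← hv, Category.assoc]
    exact (congrArg (colimYmap T.comp.g ≫ ·)
      (eC.hom_inv_id_assoc (colimit.desc (T.comp.c ⋙ preadditiveYoneda) κ))).trans hvφ'

end Paper
end

section
/- Let T be a triangulated category with countable coproducts and a nondegenerate t-structure such that countable coproducts of objects of T^{≥0} lie in T^{≥ -r} for some fixed r > 0. Then for any object Y ∈ T, the natural map hocolim Y^{≤(*)} → Y, induced from the truncation maps Y^{≤ i} → Y, is an isomorphism (after possibly correcting by an automorphism); in particular Y is isomorphic to the homotopy colimit of its truncation sequence Y^{≤1} → Y^{≤2} → Y^{≤3} → ⋯. -/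
open CategoryTheory CategoryTheory.Limits CategoryTheory.Pretriangulated ZeroObject

universe v u v₂ u₂

namespace Paper

variable (T : Type u) [Category.{v} T] [HasZeroObject T] [HasShift T ℤ]
  [Preadditive T] [∀ n : ℤ, (shiftFunctor T n).Additive] [Pretriangulated T]

/-- A t-structure on the triangulated category `T`, packaged together with a choice of
truncation functors and of the natural maps between them. -/
structure TData : Type (max u v) where
  le : ℤ → Set T
  ge : ℤ → Set T
  le_iso : ∀ n ⦃X Y : T⦄, (X ≅ Y) → X ∈ le n → Y ∈ le n
  ge_iso : ∀ n ⦃X Y : T⦄, (X ≅ Y) → X ∈ ge n → Y ∈ ge n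
  le_mono : ∀ ⦃n m : ℤ⦄, n ≤ m → le n ⊆ le m
  ge_anti : ∀ ⦃n m : ℤ⦄, n ≤ m → ge m ⊆ ge n
  le_shift : ∀ (n : ℤ) ⦃X : T⦄, X ∈ le n → X⟦(1 : ℤ)⟧ ∈ le (n - 1)
  ge_shift : ∀ (n : ℤ) ⦃X : T⦄, X ∈ ge n → X⟦(1 : ℤ)⟧ ∈ ge (n - 1)
  hom_zero : ∀ ⦃n m : ℤ⦄, n < m → ∀ ⦃X Y : T⦄, X ∈ le n → Y ∈ ge m →
    ∀ f : X ⟶ Y, f = 0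
  truncLE : ℤ → T ⥤ T
  truncGE : ℤ → T ⥤ T
  truncLEπ : ∀ n, truncLE n ⟶ 𝟭 T
  truncGEι : ∀ n, 𝟭 T ⟶ truncGE n
  truncLE_mem : ∀ n X, (truncLE n).obj X ∈ le n
  truncGE_mem : ∀ n X, (truncGE n).obj X ∈ ge n
  trunc_triangle : ∀ (n : ℤ) (X : T), ∃ h,
    Triangle.mk ((truncLEπ n).app X) ((truncGEι (n + 1)).app X) h ∈ distTriang T
  truncLEle : ∀ ⦃n m : ℤ⦄, n ≤ m → (truncLE n ⟶ truncLE m)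
  truncLEle_refl : ∀ n : ℤ, truncLEle (le_refl n) = 𝟙 (truncLE n)
  truncLEle_trans : ∀ ⦃n m k : ℤ⦄ (h₁ : n ≤ m) (h₂ : m ≤ k),
    truncLEle h₁ ≫ truncLEle h₂ = truncLEle (h₁.trans h₂)
  truncLEle_π : ∀ ⦃n m : ℤ⦄ (h : n ≤ m), truncLEle h ≫ truncLEπ m = truncLEπ n

variable [HasColimitsOfShape (Discrete ℕ) T]

/-- The "shift by one" endomorphism of `⊕ᵢ Aᵢ` for a sequence `A`, whose components are
`Aᵢ ⟶ A_{i+1} ⟶ ⊕ᵢ Aᵢ`. -/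
noncomputable def seqShift (A : ℕ ⥤ T) : (∐ fun i => A.obj i) ⟶ ∐ fun i => A.obj i :=
  Sigma.desc fun i => A.map (homOfLE (Nat.le_succ i)) ≫ Sigma.ι (fun i => A.obj i) (i + 1)

/-- `π : ⊕ᵢ Aᵢ ⟶ X` exhibits `X` as the homotopy colimit of the sequence `A`: the map
`1 − shift` followed by `π` extends to a distinguished triangle. -/
def IsHocolim (A : ℕ ⥤ T) (X : T) (π : (∐ fun i => A.obj i) ⟶ X) : Prop :=
  ∃ w, Triangle.mk (𝟙 (∐ fun i => A.obj i) - seqShift T A) π w ∈ distTriang T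

/-- The truncation sequence `Y^{≤1} ⟶ Y^{≤2} ⟶ ⋯` of an object `Y`. -/
def truncSeq (t : TData T) (Y : T) : ℕ ⥤ T where
  obj i := (t.truncLE ((i : ℤ) + 1)).obj Y
  map {i j} f :=
    (t.truncLEle (show ((i : ℤ) + 1) ≤ (j : ℤ) + 1 by have := leOfHom f; omega)).app Y
  map_id i := by
    show (t.truncLEle (le_refl ((i : ℤ) + 1))).app Y = 𝟙 _
    rw [t.truncLEle_refl]
    rfl
  map_comp {i j k} f g := by
    show _ = (t.truncLEle _ ≫ t.truncLEle _).app Y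
    rw [t.truncLEle_trans]


set_option linter.unusedSectionVars false

section Aux

variable {t : TData T}

lemma isZero_of_shift_isZero (X : T) (h : IsZero (X⟦(1:ℤ)⟧)) : IsZero X := by
  rw [IsZero.iff_id_eq_zero] at h ⊢
  apply (shiftFunctor T (1:ℤ)).map_injective
  rw [CategoryTheory.Functor.map_id, CategoryTheory.Functor.map_zero]
  exact h

/-- Transfer of a morphism `D ⟶ V⟦1⟧` to a morphism `D⟦-1⟧ ⟶ V`. -/
noncomputable def down {D V : T} (φ : D ⟶ V⟦(1:ℤ)⟧) : D⟦(-1:ℤ)⟧ ⟶ V :=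
  (shiftFunctor T (-1:ℤ)).map φ ≫
    (shiftFunctorCompIsoId T (1:ℤ) (-1:ℤ) (by omega)).hom.app V

lemma down_comp {D V W : T} (φ : D ⟶ V⟦(1:ℤ)⟧) (f : V ⟶ W) :
    down T (φ ≫ f⟦(1:ℤ)⟧') = down T φ ≫ f := by
  dsimp only [down]
  rw [CategoryTheory.Functor.map_comp, Category.assoc, Category.assoc]
  congr 1
  exact (shiftFunctorCompIsoId T (1:ℤ) (-1:ℤ) (by omega)).hom.naturality f

lemma down_eq_zero_iff {D V : T} (φ : D ⟶ V⟦(1:ℤ)⟧) : down T φ = 0 ↔ φ = 0 := by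
  constructor
  · intro h
    apply (shiftFunctor T (-1:ℤ)).map_injective
    rw [CategoryTheory.Functor.map_zero]
    rw [← cancel_mono ((shiftFunctorCompIsoId T (1:ℤ) (-1:ℤ) (by omega)).hom.app V), zero_comp]
    exact h
  · intro h
    simp [down, h]

lemma hom_zero_neg_shift {c c' : ℤ} (h : c - 1 < c') {D Z : T}
    (hD : D ∈ t.le c) (hZ : Z ∈ t.ge c') (φ : D ⟶ Z⟦(-1:ℤ)⟧) : φ = 0 := by
  apply (shiftFunctor T (1:ℤ)).map_injective
  rw [CategoryTheory.Functor.map_zero]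
  rw [← cancel_mono ((shiftFunctorCompIsoId T (-1:ℤ) (1:ℤ) (by omega)).hom.app Z), zero_comp]
  exact t.hom_zero h (t.le_shift c hD) hZ _

lemma ge_of_pi_zero {a : ℤ} {E : T} (h : (t.truncLEπ a).app E = 0) :
    E ∈ t.ge (a + 1) := by
  obtain ⟨h3, hT⟩ := t.trunc_triangle a E
  obtain ⟨s, hs⟩ := Triangle.coyoneda_exact₂ _ (rot_of_distTriang _ (rot_of_distTriang _ hT))
    (𝟙 (((t.truncLE a).obj E)⟦(1:ℤ)⟧)) (by
      show 𝟙 (((t.truncLE a).obj E)⟦(1:ℤ)⟧) ≫ (-((shiftFunctor T (1:ℤ)).map ((t.truncLEπ a).app E))) = 0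
      rw [h]; simp)
  have hs0 : s = 0 := t.hom_zero (show a - 1 < a + 1 by omega)
    (t.le_shift a (t.truncLE_mem a E)) (t.truncGE_mem (a+1) E) s
  rw [hs0, zero_comp] at hs
  have hz : IsZero ((t.truncLE a).obj E) :=
    isZero_of_shift_isZero T _ ((IsZero.iff_id_eq_zero _).mpr hs)
  have hiso : IsIso ((t.truncGEι (a+1)).app E) :=
    (Triangle.isZero₁_iff_isIso₂ _ hT).mp hz
  exact t.ge_iso (a+1) (asIso ((t.truncGEι (a+1)).app E)).symm (t.truncGE_mem (a+1) E)

lemma le_of_iota_zero {a : ℤ} {E : T} (h : (t.truncGEι (a+1)).app E = 0) :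
    E ∈ t.le a := by
  obtain ⟨h3, hT⟩ := t.trunc_triangle a E
  obtain ⟨χ, hχ⟩ := Triangle.yoneda_exact₂ _ (rot_of_distTriang _ hT)
    (𝟙 ((t.truncGE (a+1)).obj E)) (by dsimp; rw [h]; exact zero_comp)
  have hχ0 : χ = 0 := t.hom_zero (show a - 1 < a + 1 by omega)
    (t.le_shift a (t.truncLE_mem a E)) (t.truncGE_mem (a+1) E) χ
  rw [hχ0, comp_zero] at hχ
  have hz : IsZero ((t.truncGE (a+1)).obj E) := (IsZero.iff_id_eq_zero _).mpr hχ
  have hiso : IsIso ((t.truncLEπ a).app E) :=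
    (Triangle.isZero₃_iff_isIso₁ _ hT).mp hz
  exact t.le_iso a (asIso ((t.truncLEπ a).app E)) (t.truncLE_mem a E)

lemma ge_neg_shift {c : ℤ} {Z : T} (hZ : Z ∈ t.ge c) : Z⟦(-1:ℤ)⟧ ∈ t.ge (c + 1) :=
  ge_of_pi_zero T (hom_zero_neg_shift T (show c - 1 < c by omega)
    (t.truncLE_mem c (Z⟦(-1:ℤ)⟧)) hZ _)

lemma le_neg_shift {c : ℤ} {Z : T} (hZ : Z ∈ t.le c) : Z⟦(-1:ℤ)⟧ ∈ t.le (c + 1) := by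
  apply le_of_iota_zero (T := T) (t := t)
  have hG1 : ((t.truncGE (c+1+1)).obj (Z⟦(-1:ℤ)⟧))⟦(1:ℤ)⟧ ∈ t.ge (c+1+1-1) :=
    t.ge_shift _ (t.truncGE_mem _ _)
  apply (shiftFunctor T (1:ℤ)).map_injective
  rw [CategoryTheory.Functor.map_zero]
  rw [← cancel_epi ((shiftFunctorCompIsoId T (-1:ℤ) (1:ℤ) (by omega)).inv.app Z), comp_zero]
  exact t.hom_zero (show c < c+1+1-1 by omega) hZ hG1 _


lemma truncLEle_π_app {a b : ℤ} (hab : a ≤ b) (Y' : T) :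
    (t.truncLEle hab).app Y' ≫ (t.truncLEπ b).app Y' = (t.truncLEπ a).app Y' := by
  have := congr_app (t.truncLEle_π hab) Y'
  simpa using this

lemma truncLEle_app_comp {a b c : ℤ} (h1 : a ≤ b) (h2 : b ≤ c) (Y' : T) :
    (t.truncLEle h1).app Y' ≫ (t.truncLEle h2).app Y' = (t.truncLEle (h1.trans h2)).app Y' := by
  have := congr_app (t.truncLEle_trans h1 h2) Y'
  simpa using this

lemma hcoprod_ge (r : ℤ)
    (hcoprod : ∀ X : ℕ → T, (∀ i, X i ∈ t.ge 0) → (∐ X) ∈ t.ge (-r))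
    (c : ℕ) : ∀ (Xs : ℕ → T), (∀ i, Xs i ∈ t.ge (c : ℤ)) → (∐ Xs) ∈ t.ge ((c : ℤ) - r) := by
  induction c with
  | zero =>
    intro Xs h
    have := hcoprod Xs (by exact_mod_cast h)
    have e : -r = (0 : ℤ) - r := by ring
    exact e ▸ (by exact_mod_cast this)
  | succ c ih =>
    intro Xs h
    have h1 : ∀ i, (Xs i)⟦(1:ℤ)⟧ ∈ t.ge (c : ℤ) := by
      intro i
      have h2 := t.ge_shift _ (h i)
      have e : ((c+1 : ℕ) : ℤ) - 1 = (c : ℤ) := by push_cast; ring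
      exact e ▸ h2
    have h2 := ih (fun i => (Xs i)⟦(1:ℤ)⟧) h1
    have h3 : ((∐ Xs)⟦(1:ℤ)⟧) ∈ t.ge ((c:ℤ) - r) :=
      t.ge_iso _ (asIso (sigmaComparison (shiftFunctor T (1:ℤ)) Xs)) h2
    have h4 := t.ge_iso _ ((shiftFunctorCompIsoId T (1:ℤ) (-1:ℤ) (by omega)).app (∐ Xs))
      (ge_neg_shift T h3)
    have e : ((c+1 : ℕ) : ℤ) - r = ((c:ℤ) - r) + 1 := by push_cast; ring
    exact e ▸ h4

lemma cone_truncLEle_ge {a b : ℤ} (hab : a ≤ b) (Y' E : T)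
    (g : (t.truncLE b).obj Y' ⟶ E) (e : E ⟶ ((t.truncLE a).obj Y')⟦(1:ℤ)⟧)
    (hT : Triangle.mk ((t.truncLEle hab).app Y') g e ∈ distTriang T) :
    E ∈ t.ge (a + 1) := by
  have hφ : ∀ (D : T), D ∈ t.le a → ∀ φ : D ⟶ E, φ = 0 := by
    intro D hD φ
    obtain ⟨ha3, hTa⟩ := t.trunc_triangle a Y'
    obtain ⟨hb3, hTb⟩ := t.trunc_triangle b Y'
    have hcons : e ≫ ((t.truncLEle hab).app Y')⟦(1:ℤ)⟧' = 0 := by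
      have := comp_distTriang_mor_zero₃₁ _ hT
      exact this
    have hζ : down T (φ ≫ e) ≫ (t.truncLEle hab).app Y' = 0 := by
      rw [← down_comp, Category.assoc, hcons, comp_zero]
      simp [down]
    have hπ : down T (φ ≫ e) ≫ (t.truncLEπ a).app Y' = 0 := by
      rw [← truncLEle_π_app T hab Y', ← Category.assoc, hζ, zero_comp]
    obtain ⟨η, hη⟩ := Triangle.coyoneda_exact₂ _ (inv_rot_of_distTriang _ hTa)
      (down T (φ ≫ e)) (by exact hπ)
    have hη0 : η = 0 :=
      hom_zero_neg_shift T (show (a + 1) - 1 < a + 1 by omega) (le_neg_shift T hD)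
        (t.truncGE_mem _ _) η
    have hφe : φ ≫ e = 0 := (down_eq_zero_iff T _).mp (by rw [hη0, zero_comp] at hη; exact hη)
    obtain ⟨ξ, hξ⟩ : ∃ ξ : D ⟶ (t.truncLE b).obj Y', φ = ξ ≫ g := by
      obtain ⟨ξ, hξ⟩ := Triangle.coyoneda_exact₂ _ (rot_of_distTriang _ hT) φ (by exact hφe)
      exact ⟨ξ, hξ⟩
    have h1 : (ξ ≫ (t.truncLEπ b).app Y') ≫ (t.truncGEι (a+1)).app Y' = 0 :=
      t.hom_zero (show a < a + 1 by omega) hD (t.truncGE_mem _ _) _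
    obtain ⟨ξ₂, hξ₂⟩ : ∃ ξ₂ : D ⟶ (t.truncLE a).obj Y',
        ξ ≫ (t.truncLEπ b).app Y' = ξ₂ ≫ (t.truncLEπ a).app Y' := Triangle.coyoneda_exact₂ _ hTa (ξ ≫ (t.truncLEπ b).app Y') (by exact h1)
    have h2 : (ξ - ξ₂ ≫ (t.truncLEle hab).app Y') ≫ (t.truncLEπ b).app Y' = 0 := by
      rw [Preadditive.sub_comp, Category.assoc, truncLEle_π_app T hab Y']
      rw [show ξ ≫ (t.truncLEπ b).app Y' = ξ₂ ≫ (t.truncLEπ a).app Y' from hξ₂]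
      simp
    obtain ⟨η₂, hη₂⟩ := Triangle.coyoneda_exact₂ _ (inv_rot_of_distTriang _ hTb) _ (by exact h2)
    have hη₂0 : η₂ = 0 :=
      hom_zero_neg_shift T (show a - 1 < b + 1 by omega) hD (t.truncGE_mem _ _) η₂
    have hξu : ξ = ξ₂ ≫ (t.truncLEle hab).app Y' := by
      have h5 := hη₂
      rw [hη₂0, zero_comp] at h5
      exact sub_eq_zero.mp h5
    have hug : (t.truncLEle hab).app Y' ≫ g = 0 := comp_distTriang_mor_zero₁₂ _ hT
    rw [show φ = ξ ≫ g from hξ, hξu, Category.assoc, hug, comp_zero]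
  exact ge_of_pi_zero T (hφ _ (t.truncLE_mem a E) _)


lemma ι_seqShift (A : ℕ ⥤ T) (i : ℕ) :
    Sigma.ι (fun j => A.obj j) i ≫ seqShift T A =
      A.map (homOfLE (Nat.le_succ i)) ≫ Sigma.ι (fun j => A.obj j) (i+1) := by
  simp [seqShift]

/-- Iterates of the shift endomorphism. -/
noncomputable def seqShiftIter (A : ℕ ⥤ T) : ℕ → ((∐ fun i => A.obj i) ⟶ (∐ fun i => A.obj i))
  | 0 => 𝟙 _
  | (N+1) => seqShiftIter A N ≫ seqShift T A

lemma ι_seqShiftIter (A : ℕ ⥤ T) (N i : ℕ) :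
    Sigma.ι (fun j => A.obj j) i ≫ seqShiftIter T A N =
      A.map (homOfLE (Nat.le_add_right i N)) ≫ Sigma.ι (fun j => A.obj j) (i+N) := by
  induction N with
  | zero =>
    rw [show A.map (homOfLE (Nat.le_add_right i 0)) = 𝟙 _ by
      rw [show homOfLE (Nat.le_add_right i 0) = 𝟙 i from rfl, A.map_id]]
    rw [show seqShiftIter T A 0 = 𝟙 _ from rfl]
    simp
  | succ N ih =>
    rw [show seqShiftIter T A (N+1) = seqShiftIter T A N ≫ seqShift T A from rfl,
      ← Category.assoc, ih, Category.assoc, ι_seqShift, ← Category.assoc, ← A.map_comp,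
      homOfLE_comp]
    rfl

lemma one_sub_seqShiftIter (A : ℕ ⥤ T) (N : ℕ) :
    𝟙 (∐ fun i => A.obj i) - seqShiftIter T A N =
      (∑ j ∈ Finset.range N, seqShiftIter T A j) ≫ (𝟙 _ - seqShift T A) := by
  rw [Preadditive.sum_comp]
  have h : ∀ j, seqShiftIter T A j ≫ (𝟙 (∐ fun i => A.obj i) - seqShift T A) =
      seqShiftIter T A j - seqShiftIter T A (j+1) := by
    intro j
    rw [Preadditive.comp_sub, Category.comp_id]
    rfl
  rw [Finset.sum_congr rfl (fun j _ => h j), Finset.sum_range_sub']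
  rfl


section Tail

variable (t : TData T) (Y : T)

lemma truncSeq_map_eq {i j : ℕ} (h : i ≤ j) (h' : ((i:ℤ)+1) ≤ ((j:ℤ)+1)) :
    (truncSeq T t Y).map (homOfLE h) = (t.truncLEle h').app Y := rfl

/-- Inclusion of the tail coproduct. -/
noncomputable def tailIncl (N : ℕ) :
    (∐ fun i => (truncSeq T t Y).obj (N + i)) ⟶ (∐ fun i => (truncSeq T t Y).obj i) :=
  Sigma.desc fun i => Sigma.ι (fun j => (truncSeq T t Y).obj j) (N + i)

/-- Projection-like map to the tail coproduct. -/
noncomputable def tailProj (N : ℕ) :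
    (∐ fun i => (truncSeq T t Y).obj i) ⟶ (∐ fun i => (truncSeq T t Y).obj (N + i)) :=
  Sigma.desc fun i => (truncSeq T t Y).map (homOfLE (by omega : i ≤ N + i)) ≫
    Sigma.ι (fun j => (truncSeq T t Y).obj (N + j)) i

/-- The shift endomorphism of the tail coproduct. -/
noncomputable def tailShift (N : ℕ) :
    (∐ fun i => (truncSeq T t Y).obj (N + i)) ⟶ (∐ fun i => (truncSeq T t Y).obj (N + i)) :=
  Sigma.desc fun i => (truncSeq T t Y).map (homOfLE (by omega : N + i ≤ N + (i+1))) ≫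
    Sigma.ι (fun j => (truncSeq T t Y).obj (N + j)) (i+1)

/-- The canonical map from the tail coproduct to `Y`. -/
noncomputable def tailπ (N : ℕ) : (∐ fun i => (truncSeq T t Y).obj (N + i)) ⟶ Y :=
  Sigma.desc fun i => (t.truncLEπ ((↑(N+i):ℤ)+1)).app Y

/-- Shift on the constant coproduct. -/
noncomputable def constShift (K : T) : (∐ fun _ : ℕ => K) ⟶ (∐ fun _ : ℕ => K) :=
  Sigma.desc fun i => Sigma.ι (fun _ : ℕ => K) (i+1)

/-- Fold map on the constant coproduct. -/
noncomputable def constFold (K : T) : (∐ fun _ : ℕ => K) ⟶ K :=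
  Sigma.desc fun _ => 𝟙 K

/-- Partial-sum contraction on the constant coproduct. -/
noncomputable def constSigma (K : T) : (∐ fun _ : ℕ => K) ⟶ (∐ fun _ : ℕ => K) :=
  Sigma.desc fun i => -(∑ j ∈ Finset.range i, Sigma.ι (fun _ : ℕ => K) j)

/-- The comparison map from the constant coproduct to the tail coproduct. -/
noncomputable def constRho (n : ℤ) (N : ℕ) (h : ∀ i : ℕ, n ≤ ((N+i : ℕ):ℤ)+1) :
    (∐ fun _ : ℕ => (t.truncLE n).obj Y) ⟶ (∐ fun i => (truncSeq T t Y).obj (N + i)) :=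
  Sigma.desc fun i => (t.truncLEle (h i)).app Y ≫
    Sigma.ι (fun j => (truncSeq T t Y).obj (N + j)) i

lemma ι_tailIncl (N i : ℕ) :
    Sigma.ι (fun j => (truncSeq T t Y).obj (N + j)) i ≫ tailIncl T t Y N =
      Sigma.ι (fun j => (truncSeq T t Y).obj j) (N + i) := by
  simp [tailIncl]

lemma ι_tailProj (i N : ℕ) :
    Sigma.ι (fun j => (truncSeq T t Y).obj j) i ≫ tailProj T t Y N =
      (truncSeq T t Y).map (homOfLE (by omega : i ≤ N + i)) ≫
        Sigma.ι (fun j => (truncSeq T t Y).obj (N + j)) i := by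
  simp [tailProj]

lemma ι_tailShift (N i : ℕ) :
    Sigma.ι (fun j => (truncSeq T t Y).obj (N + j)) i ≫ tailShift T t Y N =
      (truncSeq T t Y).map (homOfLE (by omega : N + i ≤ N + (i+1))) ≫
        Sigma.ι (fun j => (truncSeq T t Y).obj (N + j)) (i+1) := by
  simp [tailShift]

lemma ι_tailπ (N i : ℕ) :
    Sigma.ι (fun j => (truncSeq T t Y).obj (N + j)) i ≫ tailπ T t Y N =
      (t.truncLEπ (((N+i : ℕ):ℤ)+1)).app Y := by
  exact Sigma.ι_desc _ _

lemma ι_constShift (K : T) (i : ℕ) :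
    Sigma.ι (fun _ : ℕ => K) i ≫ constShift T K = Sigma.ι (fun _ : ℕ => K) (i+1) := by
  simp [constShift]

lemma ι_constFold (K : T) (i : ℕ) :
    Sigma.ι (fun _ : ℕ => K) i ≫ constFold T K = 𝟙 K := by
  simp [constFold]

lemma ι_constSigma (K : T) (i : ℕ) :
    Sigma.ι (fun _ : ℕ => K) i ≫ constSigma T K =
      -(∑ j ∈ Finset.range i, Sigma.ι (fun _ : ℕ => K) j) := by
  simp [constSigma]

lemma ι_constRho (n : ℤ) (N : ℕ) (h : ∀ i : ℕ, n ≤ ((N+i : ℕ):ℤ)+1) (i : ℕ) :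
    Sigma.ι (fun _ : ℕ => (t.truncLE n).obj Y) i ≫ constRho T t Y n N h =
      (t.truncLEle (h i)).app Y ≫ Sigma.ι (fun j => (truncSeq T t Y).obj (N + j)) i := by
  simp [constRho]

lemma map_ι_reindex {i j k : ℕ} (h1 : i ≤ j) (h2 : i ≤ k) (hjk : j = k) :
    (truncSeq T t Y).map (homOfLE h1) ≫ Sigma.ι (fun l => (truncSeq T t Y).obj l) j =
      (truncSeq T t Y).map (homOfLE h2) ≫ Sigma.ι (fun l => (truncSeq T t Y).obj l) k := by
  subst hjk
  rfl

lemma constShift_sigma (K : T) :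
    (𝟙 (∐ fun _ : ℕ => K) - constShift T K) ≫ constSigma T K = 𝟙 _ := by
  apply Sigma.hom_ext
  intro i
  rw [← Category.assoc, Preadditive.comp_sub, Category.comp_id, ι_constShift,
    Preadditive.sub_comp, ι_constSigma, ι_constSigma, Finset.sum_range_succ]
  abel

lemma constSigma_shift (K : T) :
    constSigma T K ≫ (𝟙 (∐ fun _ : ℕ => K) - constShift T K) =
      𝟙 _ - constFold T K ≫ Sigma.ι (fun _ : ℕ => K) 0 := by
  apply Sigma.hom_ext
  intro i
  have e2 : ∀ j : ℕ, Sigma.ι (fun _ : ℕ => K) j ≫ (𝟙 (∐ fun _ : ℕ => K) - constShift T K) =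
      Sigma.ι (fun _ : ℕ => K) j - Sigma.ι (fun _ : ℕ => K) (j+1) := by
    intro j
    rw [Preadditive.comp_sub, Category.comp_id, ι_constShift]
  rw [← Category.assoc, ι_constSigma, Preadditive.neg_comp, Preadditive.sum_comp,
    Finset.sum_congr rfl (fun j _ => e2 j)]
  rw [show ∑ j ∈ Finset.range i, (Sigma.ι (fun _ : ℕ => K) j - Sigma.ι (fun _ : ℕ => K) (j+1)) =
      -(∑ j ∈ Finset.range i, (Sigma.ι (fun _ : ℕ => K) (j+1) - Sigma.ι (fun _ : ℕ => K) j)) by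
    rw [← Finset.sum_neg_distrib]
    exact Finset.sum_congr rfl (fun j _ => by rw [neg_sub])]
  rw [neg_neg, Finset.sum_range_sub (fun j => Sigma.ι (fun _ : ℕ => K) j) i]
  rw [Preadditive.comp_sub, Category.comp_id, ← Category.assoc, ι_constFold, Category.id_comp]

lemma rho_shift (n : ℤ) (N : ℕ) (h : ∀ i : ℕ, n ≤ ((N+i : ℕ):ℤ)+1) :
    constRho T t Y n N h ≫ tailShift T t Y N =
      constShift T ((t.truncLE n).obj Y) ≫ constRho T t Y n N h := by
  apply Sigma.hom_ext
  intro i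
  have L : Sigma.ι (fun _ : ℕ => (t.truncLE n).obj Y) i ≫
      (constRho T t Y n N h ≫ tailShift T t Y N) =
      (t.truncLEle (h (i+1))).app Y ≫ Sigma.ι (fun j => (truncSeq T t Y).obj (N + j)) (i+1) := by
    erw [← Category.assoc, ι_constRho, Category.assoc, ι_tailShift, ← Category.assoc,
      truncSeq_map_eq T t Y _ (by push_cast; omega :
        (((N+i : ℕ):ℤ)+1) ≤ (((N+(i+1) : ℕ):ℤ)+1)), truncLEle_app_comp]; rfl
  have R : Sigma.ι (fun _ : ℕ => (t.truncLE n).obj Y) i ≫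
      (constShift T ((t.truncLE n).obj Y) ≫ constRho T t Y n N h) =
      (t.truncLEle (h (i+1))).app Y ≫ Sigma.ι (fun j => (truncSeq T t Y).obj (N + j)) (i+1) := by
    rw [← Category.assoc, ι_constShift, ι_constRho]
  rw [L, R]

lemma rho_π (n : ℤ) (N : ℕ) (h : ∀ i : ℕ, n ≤ ((N+i : ℕ):ℤ)+1) :
    constRho T t Y n N h ≫ tailπ T t Y N =
      constFold T ((t.truncLE n).obj Y) ≫ (t.truncLEπ n).app Y := by
  apply Sigma.hom_ext
  intro i
  erw [← Category.assoc, ι_constRho, Category.assoc, ι_tailπ, truncLEle_π_app,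
    ← Category.assoc, ι_constFold, Category.id_comp]

lemma shift_tailProj (N : ℕ) :
    seqShift T (truncSeq T t Y) ≫ tailProj T t Y N = tailProj T t Y N ≫ tailShift T t Y N := by
  apply Sigma.hom_ext
  intro i
  have L : Sigma.ι (fun j => (truncSeq T t Y).obj j) i ≫
      (seqShift T (truncSeq T t Y) ≫ tailProj T t Y N) =
      (truncSeq T t Y).map (homOfLE (by omega : i ≤ N + (i+1))) ≫
        Sigma.ι (fun j => (truncSeq T t Y).obj (N + j)) (i+1) := by
    rw [← Category.assoc, ι_seqShift, Category.assoc, ι_tailProj, ← Category.assoc,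
      ← Functor.map_comp, homOfLE_comp]
  have R : Sigma.ι (fun j => (truncSeq T t Y).obj j) i ≫
      (tailProj T t Y N ≫ tailShift T t Y N) =
      (truncSeq T t Y).map (homOfLE (by omega : i ≤ N + (i+1))) ≫
        Sigma.ι (fun j => (truncSeq T t Y).obj (N + j)) (i+1) := by
    rw [← Category.assoc, ι_tailProj, Category.assoc, ι_tailShift, ← Category.assoc,
      ← Functor.map_comp, homOfLE_comp]
  rw [L, R]

lemma tailProj_incl (N : ℕ) :
    tailProj T t Y N ≫ tailIncl T t Y N = seqShiftIter T (truncSeq T t Y) N := by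
  apply Sigma.hom_ext
  intro i
  rw [ι_seqShiftIter, ← Category.assoc, ι_tailProj, Category.assoc, ι_tailIncl]
  exact (map_ι_reindex T t Y _ _ (by omega)).symm

lemma tailIncl_shift (N : ℕ) :
    tailIncl T t Y N ≫ seqShift T (truncSeq T t Y) = tailShift T t Y N ≫ tailIncl T t Y N := by
  apply Sigma.hom_ext
  intro i
  have L : Sigma.ι (fun j => (truncSeq T t Y).obj (N + j)) i ≫
      (tailIncl T t Y N ≫ seqShift T (truncSeq T t Y)) =
      (truncSeq T t Y).map (homOfLE (by omega : N + i ≤ N + (i+1))) ≫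
        Sigma.ι (fun j => (truncSeq T t Y).obj j) (N + (i+1)) := by
    rw [← Category.assoc, ι_tailIncl, ι_seqShift]
    rfl
  have R : Sigma.ι (fun j => (truncSeq T t Y).obj (N + j)) i ≫
      (tailShift T t Y N ≫ tailIncl T t Y N) =
      (truncSeq T t Y).map (homOfLE (by omega : N + i ≤ N + (i+1))) ≫
        Sigma.ι (fun j => (truncSeq T t Y).obj j) (N + (i+1)) := by
    rw [← Category.assoc, ι_tailShift, Category.assoc, ι_tailIncl]
  rw [L, R]

lemma tailProj_π (N : ℕ) :
    tailProj T t Y N ≫ tailπ T t Y N =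
      Limits.Sigma.desc (fun i : ℕ => (t.truncLEπ ((i:ℤ)+1)).app Y) := by
  apply Sigma.hom_ext
  intro i
  erw [← Category.assoc, ι_tailProj, Category.assoc, ι_tailπ, Sigma.ι_desc,
    truncSeq_map_eq T t Y _ (by push_cast; omega : ((i:ℤ)+1) ≤ (((N+i : ℕ):ℤ)+1)),
    truncLEle_π_app]

end Tail


lemma key (t : TData T) (r : ℤ) (hr : 0 < r)
    (hcoprod : ∀ X : ℕ → T, (∀ i, X i ∈ t.ge 0) → (∐ X) ∈ t.ge (-r))
    (Y : T) (m : ℤ) {D : T} (hD : D ∈ t.le m) :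
    (∀ x : D ⟶ ∐ (fun i => (truncSeq T t Y).obj i),
        x ≫ (𝟙 _ - seqShift T (truncSeq T t Y)) = 0 → x = 0) ∧
    (∀ x : D ⟶ ∐ (fun i => (truncSeq T t Y).obj i),
        x ≫ (Limits.Sigma.desc (fun i : ℕ => (t.truncLEπ ((i:ℤ)+1)).app Y)) = 0 →
        ∃ u, x = u ≫ (𝟙 _ - seqShift T (truncSeq T t Y))) := by
  set n : ℤ := max (m + r + 1) 0 with hn
  have hn1 : m + r + 1 ≤ n := le_max_left _ _
  have hn0 : 0 ≤ n := le_max_right _ _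
  set N : ℕ := n.toNat with hNdef
  have hNn : (N : ℤ) = n := Int.toNat_of_nonneg hn0
  have hρ : ∀ i : ℕ, n ≤ ((N+i : ℕ):ℤ)+1 := by intro i; push_cast; omega
  -- cones over the comparison maps
  have hE : ∀ i : ℕ, ∃ (E : T) (gi : (truncSeq T t Y).obj (N + i) ⟶ E)
      (ei : E ⟶ ((t.truncLE n).obj Y)⟦(1:ℤ)⟧),
      Triangle.mk ((t.truncLEle (hρ i)).app Y) gi ei ∈ distTriang T := fun i =>
    Pretriangulated.distinguished_cocone_triangle ((t.truncLEle (hρ i)).app Y)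
  choose E gE eE hET using hE
  have hEge : ∀ i, E i ∈ t.ge (n + 1) := fun i =>
    cone_truncLEle_ge T (hρ i) Y (E i) (gE i) (eE i) (hET i)
  have hcop : (∐ E) ∈ t.ge ((n+1) - r) := by
    have hc : (((n+1).toNat : ℕ) : ℤ) = n + 1 := Int.toNat_of_nonneg (by omega)
    have h9 := hcoprod_ge T r hcoprod (n+1).toNat E (fun i => by rw [hc]; exact hEge i)
    rw [hc] at h9
    exact h9
  obtain ⟨Zo, g, h, hZT⟩ :=
    Pretriangulated.distinguished_cocone_triangle (constRho T t Y n N hρ)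
  have hsq : ∀ i, (t.truncLEle (hρ i)).app Y ≫
      Sigma.ι (fun j => (truncSeq T t Y).obj (N + j)) i =
      Sigma.ι (fun _ : ℕ => (t.truncLE n).obj Y) i ≫ constRho T t Y n N hρ :=
    fun i => (ι_constRho T t Y n N hρ i).symm
  have hc' : ∀ i, ∃ ci : E i ⟶ Zo,
      gE i ≫ ci = Sigma.ι (fun j => (truncSeq T t Y).obj (N + j)) i ≫ g ∧
      eE i ≫ (Sigma.ι (fun _ : ℕ => (t.truncLE n).obj Y) i)⟦(1:ℤ)⟧' = ci ≫ h := by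
    intro i
    obtain ⟨ci, h1, h2⟩ := Pretriangulated.complete_distinguished_triangle_morphism
      (Triangle.mk ((t.truncLEle (hρ i)).app Y) (gE i) (eE i))
      (Triangle.mk (constRho T t Y n N hρ) g h) (hET i) hZT
      (Sigma.ι (fun _ : ℕ => (t.truncLE n).obj Y) i)
      (Sigma.ι (fun j => (truncSeq T t Y).obj (N + j)) i) (hsq i)
    exact ⟨ci, h1, h2⟩
  choose cE hc1 hc2 using hc'
  set c : (∐ E) ⟶ Zo := Limits.Sigma.desc cE with hcdef
  -- ι's of the inverse shift comparison
  have hinv : ∀ i : ℕ,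
      (Sigma.ι (fun _ : ℕ => (t.truncLE n).obj Y) i)⟦(1:ℤ)⟧' ≫
        inv (sigmaComparison (shiftFunctor T (1:ℤ)) (fun _ : ℕ => (t.truncLE n).obj Y)) =
      Sigma.ι (fun _ : ℕ => ((t.truncLE n).obj Y)⟦(1:ℤ)⟧) i := by
    intro i
    rw [← ι_comp_sigmaComparison (shiftFunctor T (1:ℤ))
      (fun _ : ℕ => (t.truncLE n).obj Y) i, Category.assoc, IsIso.hom_inv_id, Category.comp_id]
  have hinvgen : ∀ (F : ℕ → T) (i : ℕ),
      (Sigma.ι F i)⟦(1:ℤ)⟧' ≫ inv (sigmaComparison (shiftFunctor T (1:ℤ)) F) =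
        Sigma.ι (fun j => (F j)⟦(1:ℤ)⟧) i := by
    intro F i
    rw [← ι_comp_sigmaComparison (shiftFunctor T (1:ℤ)) F i, Category.assoc,
      IsIso.hom_inv_id, Category.comp_id]
  -- surjectivity of precomposition with c
  have hsurj : ∀ {W : T} (α : (∐ E) ⟶ W), ∃ β : Zo ⟶ W, c ≫ β = α := by
    intro W α
    have hργ : constRho T t Y n N hρ ≫
        (Limits.Sigma.desc (fun i => gE i ≫ Sigma.ι E i ≫ α)) = 0 := by
      apply Sigma.hom_ext
      intro i
      have h0 : (t.truncLEle (hρ i)).app Y ≫ gE i = 0 := comp_distTriang_mor_zero₁₂ _ (hET i)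
      erw [← Category.assoc, ι_constRho, Category.assoc, Sigma.ι_desc, ← Category.assoc, h0,
        zero_comp, comp_zero]
    obtain ⟨β₁, hβ₁⟩ : ∃ β₁ : Zo ⟶ W,
        Limits.Sigma.desc (fun i => gE i ≫ Sigma.ι E i ≫ α) = g ≫ β₁ :=
      Triangle.yoneda_exact₂ _ hZT (Limits.Sigma.desc (fun i => gE i ≫ Sigma.ι E i ≫ α)) hργ
    have hδg : ∀ i, gE i ≫ (cE i ≫ β₁ - Sigma.ι E i ≫ α) = 0 := by
      intro i
      have e1 : gE i ≫ cE i ≫ β₁ = gE i ≫ Sigma.ι E i ≫ α := by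
        rw [← Category.assoc, hc1 i, Category.assoc, ← hβ₁, Sigma.ι_desc]
      rw [Preadditive.comp_sub, e1, sub_self]
    have hε : ∀ i, ∃ εi : ((t.truncLE n).obj Y)⟦(1:ℤ)⟧ ⟶ W,
        cE i ≫ β₁ - Sigma.ι E i ≫ α = eE i ≫ εi := by
      intro i
      obtain ⟨εi, hεi⟩ := Triangle.yoneda_exact₂ _ (rot_of_distTriang _ (hET i))
        (cE i ≫ β₁ - Sigma.ι E i ≫ α) (by exact hδg i)
      exact ⟨εi, hεi⟩
    choose εE hεE using hε
    refine ⟨β₁ - h ≫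
      (inv (sigmaComparison (shiftFunctor T (1:ℤ)) (fun _ : ℕ => (t.truncLE n).obj Y)) ≫
        Limits.Sigma.desc εE), ?_⟩
    apply Sigma.hom_ext
    intro i
    have e2 : Sigma.ι E i ≫ c = cE i := by rw [hcdef, Sigma.ι_desc]
    have e3 : cE i ≫ h ≫
        inv (sigmaComparison (shiftFunctor T (1:ℤ)) (fun _ : ℕ => (t.truncLE n).obj Y)) ≫
          Limits.Sigma.desc εE = eE i ≫ εE i := by
      rw [← Category.assoc, ← hc2 i, Category.assoc]
      congr 1
      rw [← Category.assoc, hinvgen, Sigma.ι_desc]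
    rw [← Category.assoc, e2, Preadditive.comp_sub, e3, ← hεE i]
    abel
  -- injectivity of precomposition with c
  have hinj : ∀ {W : T} (β : Zo ⟶ W), c ≫ β = 0 → β = 0 := by
    intro W β hβ
    have ecβ : ∀ i, cE i ≫ β = 0 := by
      intro i
      rw [show cE i ≫ β = Sigma.ι E i ≫ (c ≫ β) by
        rw [← Category.assoc, hcdef, Sigma.ι_desc], hβ, comp_zero]
    have hgβ : g ≫ β = 0 := by
      apply Sigma.hom_ext
      intro i
      rw [← Category.assoc, ← hc1 i, Category.assoc, ecβ i, comp_zero, comp_zero]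
    obtain ⟨ξ, hξ⟩ : ∃ ξ : (∐ fun _ : ℕ => (t.truncLE n).obj Y)⟦(1:ℤ)⟧ ⟶ W, β = h ≫ ξ :=
      Triangle.yoneda_exact₂ _ (rot_of_distTriang _ hZT) β (by exact hgβ)
    have hξi : ∀ i, eE i ≫ ((Sigma.ι (fun _ : ℕ => (t.truncLE n).obj Y) i)⟦(1:ℤ)⟧' ≫ ξ) = 0 := by
      intro i
      rw [← Category.assoc, hc2 i, Category.assoc, ← hξ, ecβ i]
    have hζ : ∀ i, ∃ ζi : ((truncSeq T t Y).obj (N + i))⟦(1:ℤ)⟧ ⟶ W,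
        (Sigma.ι (fun _ : ℕ => (t.truncLE n).obj Y) i)⟦(1:ℤ)⟧' ≫ ξ =
          ((t.truncLEle (hρ i)).app Y)⟦(1:ℤ)⟧' ≫ ζi := by
      intro i
      obtain ⟨ζi, hζi⟩ := Triangle.yoneda_exact₂ _
        (rot_of_distTriang _ (rot_of_distTriang _ (hET i)))
        ((Sigma.ι (fun _ : ℕ => (t.truncLE n).obj Y) i)⟦(1:ℤ)⟧' ≫ ξ) (by exact hξi i)
      refine ⟨-ζi, ?_⟩
      erw [hζi]
      dsimp
      simp
      exact (Preadditive.neg_comp _ _).trans (Preadditive.comp_neg _ _).symm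
    choose ζE hζE using hζ
    have hξfac : ξ = (constRho T t Y n N hρ)⟦(1:ℤ)⟧' ≫
        (inv (sigmaComparison (shiftFunctor T (1:ℤ)) (fun j => (truncSeq T t Y).obj (N + j))) ≫
          Limits.Sigma.desc ζE) := by
      rw [← cancel_epi (sigmaComparison (shiftFunctor T (1:ℤ))
        (fun _ : ℕ => (t.truncLE n).obj Y))]
      apply Sigma.hom_ext
      intro i
      rw [← Category.assoc, ← Category.assoc, ι_comp_sigmaComparison]
      erw [hζE i, ← Category.assoc, ← CategoryTheory.Functor.map_comp, ι_constRho,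
        CategoryTheory.Functor.map_comp, Category.assoc,
        ← Category.assoc ((shiftFunctor T (1:ℤ)).map
          (Sigma.ι (fun j => (truncSeq T t Y).obj (N + j)) i)), hinvgen, Sigma.ι_desc]
    have hhρ : h ≫ (constRho T t Y n N hρ)⟦(1:ℤ)⟧' = 0 := comp_distTriang_mor_zero₃₁ _ hZT
    rw [hξ, hξfac, ← Category.assoc, hhρ, zero_comp]
  -- c is an isomorphism, so Zo is a coproduct of the cones
  obtain ⟨ζc, hζc⟩ := hsurj (𝟙 (∐ E))
  have hζc2 : ζc ≫ c = 𝟙 Zo := by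
    have h10 : c ≫ (ζc ≫ c - 𝟙 Zo) = 0 := by
      rw [Preadditive.comp_sub, ← Category.assoc, hζc, Category.id_comp, Category.comp_id,
        sub_self]
    have h11 := hinj _ h10
    rwa [sub_eq_zero] at h11
  have hciso : IsIso c := ⟨ζc, hζc, hζc2⟩
  have hZge : Zo ∈ t.ge (n + 1 - r) := t.ge_iso _ (asIso c) hcop
  -- factorization through the constant coproduct
  have hfac : ∀ (x : D ⟶ (∐ fun i => (truncSeq T t Y).obj (N + i))),
      ∃ x₁, x = x₁ ≫ constRho T t Y n N hρ := by
    intro x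
    have hxg : x ≫ g = 0 := t.hom_zero (show m < n + 1 - r by omega) hD hZge _
    exact Triangle.coyoneda_exact₂ _ hZT x hxg
  have hker : ∀ (y : D ⟶ (∐ fun _ : ℕ => (t.truncLE n).obj Y)),
      y ≫ constRho T t Y n N hρ = 0 → y = 0 := by
    intro y hy
    obtain ⟨η, hη⟩ := Triangle.coyoneda_exact₂ _ (inv_rot_of_distTriang _ hZT) y (by exact hy)
    have hη0 : η = 0 :=
      hom_zero_neg_shift T (show m - 1 < n + 1 - r by omega) hD hZge η
    rw [hη, hη0, zero_comp]; rfl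
  have hcomm : (𝟙 _ - constShift T ((t.truncLE n).obj Y)) ≫ constRho T t Y n N hρ =
      constRho T t Y n N hρ ≫ (𝟙 _ - tailShift T t Y N) := by
    rw [Preadditive.sub_comp, Preadditive.comp_sub, Category.id_comp, Category.comp_id,
      rho_shift]
  -- the two tail statements
  have hIBtail : ∀ (y : D ⟶ (∐ fun i => (truncSeq T t Y).obj (N + i))),
      y ≫ (𝟙 _ - tailShift T t Y N) = 0 → y = 0 := by
    intro y hy
    obtain ⟨y₁, hy₁⟩ := hfac y
    have h5 : (y₁ ≫ (𝟙 _ - constShift T ((t.truncLE n).obj Y))) ≫ constRho T t Y n N hρ = 0 := by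
      rw [Category.assoc, hcomm, ← Category.assoc, ← hy₁, hy]
    have h6 : y₁ ≫ (𝟙 _ - constShift T ((t.truncLE n).obj Y)) = 0 := hker _ h5
    have h7 : y₁ = 0 := by
      calc y₁ = y₁ ≫ 𝟙 _ := by rw [Category.comp_id]
        _ = y₁ ≫ ((𝟙 _ - constShift T ((t.truncLE n).obj Y)) ≫
              constSigma T ((t.truncLE n).obj Y)) := by rw [constShift_sigma]
        _ = (y₁ ≫ (𝟙 _ - constShift T ((t.truncLE n).obj Y))) ≫
              constSigma T ((t.truncLE n).obj Y) := by rw [Category.assoc]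
        _ = 0 := by rw [h6, zero_comp]
    rw [hy₁, h7, zero_comp]
  have hIIBtail : ∀ (y : D ⟶ (∐ fun i => (truncSeq T t Y).obj (N + i))),
      y ≫ tailπ T t Y N = 0 → ∃ u, y = u ≫ (𝟙 _ - tailShift T t Y N) := by
    intro y hy
    obtain ⟨y₁, hy₁⟩ := hfac y
    have hz : (y₁ ≫ constFold T ((t.truncLE n).obj Y)) ≫ (t.truncLEπ n).app Y = 0 := by
      rw [Category.assoc, ← rho_π T t Y n N hρ, ← Category.assoc, ← hy₁, hy]
    have hz0 : y₁ ≫ constFold T ((t.truncLE n).obj Y) = 0 := by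
      obtain ⟨w3, hTn⟩ := t.trunc_triangle n Y
      obtain ⟨η, hη⟩ := Triangle.coyoneda_exact₂ _ (inv_rot_of_distTriang _ hTn) _ (by exact hz)
      have hη0 : η = 0 :=
        hom_zero_neg_shift T (show m - 1 < n + 1 by omega) hD (t.truncGE_mem _ _) η
      rw [hη, hη0, zero_comp]; rfl
    have h8 : y₁ = (y₁ ≫ constSigma T ((t.truncLE n).obj Y)) ≫
        (𝟙 _ - constShift T ((t.truncLE n).obj Y)) := by
      rw [Category.assoc, constSigma_shift, Preadditive.comp_sub, Category.comp_id,
        ← Category.assoc, hz0, zero_comp, sub_zero]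
    refine ⟨y₁ ≫ constSigma T ((t.truncLE n).obj Y) ≫ constRho T t Y n N hρ, ?_⟩
    rw [hy₁]
    conv_lhs => rw [h8]
    rw [Category.assoc, hcomm]
    simp only [Category.assoc]
  -- conclusion
  constructor
  · intro x hx
    have hxs : x ≫ seqShift T (truncSeq T t Y) = x := by
      have h12 := hx
      rw [Preadditive.comp_sub, Category.comp_id, sub_eq_zero] at h12
      exact h12.symm
    have hxiter : ∀ M : ℕ, x ≫ seqShiftIter T (truncSeq T t Y) M = x := by
      intro M
      induction M with
      | zero => rw [show seqShiftIter T (truncSeq T t Y) 0 = 𝟙 _ from rfl, Category.comp_id]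
      | succ M ih =>
        rw [show seqShiftIter T (truncSeq T t Y) (M+1) =
          seqShiftIter T (truncSeq T t Y) M ≫ seqShift T (truncSeq T t Y) from rfl,
          ← Category.assoc, ih, hxs]
    have hyt : (x ≫ tailProj T t Y N) ≫ (𝟙 _ - tailShift T t Y N) = 0 := by
      rw [Category.assoc, Preadditive.comp_sub, Category.comp_id, ← shift_tailProj,
        Preadditive.comp_sub, ← Category.assoc, hxs, sub_self]
    have hy0 := hIBtail _ hyt
    calc x = x ≫ seqShiftIter T (truncSeq T t Y) N := (hxiter N).symm
      _ = x ≫ tailProj T t Y N ≫ tailIncl T t Y N := by rw [tailProj_incl]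
      _ = (x ≫ tailProj T t Y N) ≫ tailIncl T t Y N := by rw [Category.assoc]
      _ = 0 := by rw [hy0, zero_comp]
  · intro x hx
    have hyt : (x ≫ tailProj T t Y N) ≫ tailπ T t Y N = 0 := by
      rw [Category.assoc, tailProj_π]
      exact hx
    obtain ⟨u, hu⟩ := hIIBtail _ hyt
    have hincl : (𝟙 _ - tailShift T t Y N) ≫ tailIncl T t Y N =
        tailIncl T t Y N ≫ (𝟙 _ - seqShift T (truncSeq T t Y)) := by
      rw [Preadditive.sub_comp, Preadditive.comp_sub, Category.id_comp, Category.comp_id,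
        tailIncl_shift]
    refine ⟨x ≫ (∑ j ∈ Finset.range N, seqShiftIter T (truncSeq T t Y) j) +
      u ≫ tailIncl T t Y N, ?_⟩
    have hsplit : x = x ≫ (𝟙 _ - seqShiftIter T (truncSeq T t Y) N) +
        (x ≫ tailProj T t Y N) ≫ tailIncl T t Y N := by
      rw [Preadditive.comp_sub, Category.comp_id, Category.assoc, tailProj_incl]
      abel
    calc x = x ≫ (𝟙 _ - seqShiftIter T (truncSeq T t Y) N) +
        (x ≫ tailProj T t Y N) ≫ tailIncl T t Y N := hsplit
      _ = (x ≫ (∑ j ∈ Finset.range N, seqShiftIter T (truncSeq T t Y) j)) ≫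
            (𝟙 _ - seqShift T (truncSeq T t Y)) +
          (u ≫ tailIncl T t Y N) ≫ (𝟙 _ - seqShift T (truncSeq T t Y)) := by
        rw [one_sub_seqShiftIter, ← Category.assoc, hu, Category.assoc, Category.assoc, hincl,
          ← Category.assoc, ← Category.assoc]
      _ = (x ≫ (∑ j ∈ Finset.range N, seqShiftIter T (truncSeq T t Y) j) +
          u ≫ tailIncl T t Y N) ≫ (𝟙 _ - seqShift T (truncSeq T t Y)) := by
        rw [Preadditive.add_comp]


lemma main_surj (t : TData T) (Y X : T)
    (π : (∐ fun i => (truncSeq T t Y).obj i) ⟶ X) (ψ : X ⟶ Y)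
    (hψ : Limits.Sigma.desc (fun i : ℕ => (t.truncLEπ ((i:ℤ)+1)).app Y) = π ≫ ψ)
    (m : ℤ) {D : T} (hD : D ∈ t.le m) (f : D ⟶ Y) : ∃ e : D ⟶ X, e ≫ ψ = f := by
  set i₀ : ℕ := m.toNat with hi
  have hm : m ≤ (i₀ : ℤ) := Int.self_le_toNat m
  obtain ⟨h3, hTn⟩ := t.trunc_triangle ((i₀:ℤ)+1) Y
  have hfι : f ≫ (t.truncGEι ((i₀:ℤ)+1+1)).app Y = 0 :=
    t.hom_zero (show m < (i₀:ℤ)+1+1 by omega) hD (t.truncGE_mem _ _) _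
  obtain ⟨ξ, hξ⟩ : ∃ ξ : D ⟶ (t.truncLE ((i₀:ℤ)+1)).obj Y, f = ξ ≫ (t.truncLEπ ((i₀:ℤ)+1)).app Y := Triangle.coyoneda_exact₂ _ hTn f (by exact hfι)
  refine ⟨ξ ≫ Sigma.ι (fun i => (truncSeq T t Y).obj i) i₀ ≫ π, ?_⟩
  erw [Category.assoc, Category.assoc, ← hψ, Sigma.ι_desc]
  exact hξ.symm

lemma main_inj (t : TData T) (r : ℤ) (hr : 0 < r)
    (hcoprod : ∀ Xs : ℕ → T, (∀ i, Xs i ∈ t.ge 0) → (∐ Xs) ∈ t.ge (-r))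
    (Y X : T) (π : (∐ fun i => (truncSeq T t Y).obj i) ⟶ X)
    (w : X ⟶ (∐ fun i => (truncSeq T t Y).obj i)⟦(1:ℤ)⟧)
    (hw : Triangle.mk (𝟙 (∐ fun i => (truncSeq T t Y).obj i) - seqShift T (truncSeq T t Y)) π w
      ∈ distTriang T)
    (ψ : X ⟶ Y)
    (hψ : Limits.Sigma.desc (fun i : ℕ => (t.truncLEπ ((i:ℤ)+1)).app Y) = π ≫ ψ)
    (m : ℤ) {D : T} (hD : D ∈ t.le m) (f : D ⟶ X) (hf : f ≫ ψ = 0) : f = 0 := by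
  have hw1 : w ≫ (𝟙 (∐ fun i => (truncSeq T t Y).obj i) -
      seqShift T (truncSeq T t Y))⟦(1:ℤ)⟧' = 0 := comp_distTriang_mor_zero₃₁ _ hw
  have hd : down T (f ≫ w) ≫ (𝟙 _ - seqShift T (truncSeq T t Y)) = 0 := by
    rw [← down_comp, Category.assoc, hw1, comp_zero]
    simp [down]
  have hd0 : down T (f ≫ w) = 0 :=
    (key T t r hr hcoprod Y (m+1) (le_neg_shift T hD)).1 _ hd
  have hfw : f ≫ w = 0 := (down_eq_zero_iff T _).mp hd0
  obtain ⟨ξ, hξ⟩ : ∃ ξ : D ⟶ (∐ fun i => (truncSeq T t Y).obj i), f = ξ ≫ π :=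
    Triangle.coyoneda_exact₂ _ (rot_of_distTriang _ hw) f (by exact hfw)
  have hξp : ξ ≫ Limits.Sigma.desc (fun i : ℕ => (t.truncLEπ ((i:ℤ)+1)).app Y) = 0 := by
    have h15 : ξ ≫ π ≫ ψ = 0 := by rw [← Category.assoc, ← hξ, hf]
    rw [← hψ] at h15
    exact h15
  obtain ⟨u, hu⟩ := (key T t r hr hcoprod Y m hD).2 _ hξp
  have hz12 : (𝟙 (∐ fun i => (truncSeq T t Y).obj i) - seqShift T (truncSeq T t Y)) ≫ π = 0 :=
    comp_distTriang_mor_zero₁₂ _ hw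
  rw [hξ, hu, Category.assoc, hz12, comp_zero]

end Aux

/-- Lemma 95.-1: for a nondegenerate t-structure on a category with
countable coproducts (raising `T^{≥0}` by at most `r`), every object `Y` is exhibited,
by a (non-canonical) isomorphism compatible with the truncation maps `Y^{≤ i} ⟶ Y`, as
the homotopy colimit of its truncation sequence `Y^{≤1} ⟶ Y^{≤2} ⟶ ⋯`. -/
theorem statement15 (t : TData T)
    (hnd : ∀ X : T, (∀ n : ℤ, X ∈ t.ge n) → IsZero X)
    (hnd' : ∀ X : T, (∀ n : ℤ, X ∈ t.le n) → IsZero X)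
    (r : ℤ) (hr : 0 < r)
    (hcoprod : ∀ X : ℕ → T, (∀ i, X i ∈ t.ge 0) → (∐ X) ∈ t.ge (-r))
    (Y X : T) (π : (∐ fun i => (truncSeq T t Y).obj i) ⟶ X)
    (hX : IsHocolim T (truncSeq T t Y) X π) :
    ∃ ψ : X ⟶ Y, IsIso ψ ∧
      ∀ i : ℕ, (Sigma.ι (fun i => (truncSeq T t Y).obj i) i ≫ π) ≫ ψ =
        (t.truncLEπ ((i : ℤ) + 1)).app Y := by
  obtain ⟨w, hw⟩ := hX
  have h0 : (𝟙 (∐ fun i => (truncSeq T t Y).obj i) - seqShift T (truncSeq T t Y)) ≫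
      Limits.Sigma.desc (fun i : ℕ => (t.truncLEπ ((i:ℤ)+1)).app Y) = 0 := by
    apply Sigma.hom_ext
    intro i
    erw [← Category.assoc, Preadditive.comp_sub, Category.comp_id, ι_seqShift,
      Preadditive.sub_comp, Sigma.ι_desc, Category.assoc, Sigma.ι_desc,
      truncSeq_map_eq T t Y (Nat.le_succ i) (by push_cast; omega), truncLEle_π_app, sub_self,
      comp_zero]
  obtain ⟨ψ, hψ⟩ : ∃ ψ : X ⟶ Y,
      Limits.Sigma.desc (fun i : ℕ => (t.truncLEπ ((i:ℤ)+1)).app Y) = π ≫ ψ :=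
    Triangle.yoneda_exact₂ _ hw _ h0
  refine ⟨ψ, ?_, ?_⟩
  · obtain ⟨C, gC, hC, hTC⟩ := Pretriangulated.distinguished_cocone_triangle ψ
    have hzero : ∀ (mm : ℤ) (D : T), D ∈ t.le mm → ∀ φ : D ⟶ C, φ = 0 := by
      intro mm D hD φ
      have hcons : hC ≫ ψ⟦(1:ℤ)⟧' = 0 := by
        have h13 : hC ≫ (-(ψ⟦(1:ℤ)⟧')) = 0 :=
          comp_distTriang_mor_zero₂₃ _ (rot_of_distTriang _ hTC)
        rwa [Preadditive.comp_neg, neg_eq_zero] at h13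
      have hdψ : down T (φ ≫ hC) ≫ ψ = 0 := by
        rw [← down_comp, Category.assoc, hcons, comp_zero]
        simp [down]
      have hd0 : down T (φ ≫ hC) = 0 :=
        main_inj T t r hr hcoprod Y X π w hw ψ hψ (mm+1) (le_neg_shift T hD) _ hdψ
      have hφh : φ ≫ hC = 0 := (down_eq_zero_iff T _).mp hd0
      obtain ⟨d, hd⟩ : ∃ d : D ⟶ Y, φ = d ≫ gC :=
        Triangle.coyoneda_exact₂ _ (rot_of_distTriang _ hTC) φ (by exact hφh)
      obtain ⟨e, he⟩ := main_surj T t Y X π ψ hψ mm hD d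
      have hψg : ψ ≫ gC = 0 := comp_distTriang_mor_zero₁₂ _ hTC
      rw [hd, ← he, Category.assoc, hψg, comp_zero]
    have hge : ∀ nn : ℤ, C ∈ t.ge nn := by
      intro nn
      have h14 := ge_of_pi_zero T (t := t) (a := nn - 1)
        (hzero (nn-1) _ (t.truncLE_mem (nn-1) C) _)
      rwa [show nn - 1 + 1 = nn by omega] at h14
    have hCzero : IsZero C := hnd C hge
    exact (Triangle.isZero₃_iff_isIso₁ _ hTC).mp hCzero
  · intro i
    erw [Category.assoc, ← hψ, Sigma.ι_desc]

end Paper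
end
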